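/- arXiv:1703.03896 — 6 statements merged into one kernel-verified Lean document; each statement's English description precedes it below -/
import Mathlib

section
/- Let k ≥ 4 and n be integers with n ≥ 30k² if k ∈ {4,5} and n ≥ 4k² if k ≥ 6. If F is a non-trivial intersecting family of k-element subsets of [n], then δ(F) ≤ C(n−2, k−2) − C(n−k−2, k−2). -/
namespace DHM

variable {n k : ℕ} {F : Finset (Finset (Fin n))}

/-- telescoping lower bound: `C(m,r+1) + d·C(m,r) ≤ C(m+d, r+1)` -/
lemma tl (m r : ℕ) : ∀ d : ℕ, Nat.choose m (r+1) + d * Nat.choose m r ≤ Nat.choose (m + d) (r+1)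
  | 0 => by simp
  | (d+1) => by
      have h := tl m r d
      have hmono : Nat.choose m r ≤ Nat.choose (m+d) r := Nat.choose_le_choose r (by omega)
      have hp : Nat.choose (m+d+1) (r+1) = Nat.choose (m+d) r + Nat.choose (m+d) (r+1) :=
        Nat.choose_succ_succ' (m+d) r
      have : m + (d+1) = m + d + 1 := by omega
      rw [this, hp]
      nlinarith [h, hmono]

/-- telescoping upper bound: `C(m+d+1, r+1) ≤ C(m,r+1) + (d+1)·C(m+d, r)` -/
lemma tu (m r : ℕ) : ∀ d : ℕ, Nat.choose (m + (d+1)) (r+1) ≤ Nat.choose m (r+1) + (d+1) * Nat.choose (m + d) r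
  | 0 => by
      have hp : Nat.choose (m+1) (r+1) = Nat.choose m r + Nat.choose m (r+1) :=
        Nat.choose_succ_succ' m r
      simp [hp]; omega
  | (d+1) => by
      have h := tu m r d
      have hmono : Nat.choose (m+d) r ≤ Nat.choose (m+d+1) r := Nat.choose_le_choose r (by omega)
      have hp : Nat.choose (m+d+1+1) (r+1) = Nat.choose (m+d+1) r + Nat.choose (m+d+1) (r+1) :=
        Nat.choose_succ_succ' (m+d+1) r
      have e1 : m + (d+1+1) = m + d + 1 + 1 := by omega
      have e2 : m + (d+1) = m + d + 1 := by omega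
      rw [e2] at h ⊢
      rw [e1, hp]
      nlinarith [h, hmono]

/-- diagonal monotonicity: `C(m,r) ≤ C(m+i, r+i)` -/
lemma diag (m r : ℕ) : ∀ i : ℕ, Nat.choose m r ≤ Nat.choose (m + i) (r + i)
  | 0 => le_refl _
  | (i+1) => by
      have h := diag m r i
      have hp : Nat.choose (m+i+1) (r+i+1) = Nat.choose (m+i) (r+i) + Nat.choose (m+i) (r+i+1) :=
        Nat.choose_succ_succ' (m+i) (r+i)
      have e1 : m + (i+1) = m + i + 1 := by omega
      have e2 : r + (i+1) = r + i + 1 := by omega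
      rw [e1, e2, hp]
      omega


lemma polycore {k n : ℕ} (hk : 4 ≤ k) (hn : 4*k^2 ≤ n) :
    3*k*((k-3)*(n-4)) ≤ (n-2*k+2)*(n-4-(k-2)*(k-4)) := by
  have hkk : k*k + 4 ≤ n := by nlinarith
  have h1 : (k-2)*(k-4) ≤ n - 4 := by
    have : (k-2)*(k-4) ≤ k*k := Nat.mul_le_mul (by omega) (by omega)
    omega
  have h2 : 2*k ≤ n := by nlinarith
  have h3 : (3:ℕ) ≤ k := by omega
  have h4 : (4:ℕ) ≤ n := by omega
  have h5 : (2:ℕ) ≤ k := by omega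
  have h6 : (4:ℕ) ≤ k := hk
  zify [h1, h3, h4, h2, h5, h6]
  have hn' : (4:ℤ)*(k:ℤ)^2 ≤ (n:ℤ) := by exact_mod_cast hn
  have hk' : (4:ℤ) ≤ (k:ℤ) := by exact_mod_cast hk
  nlinarith [mul_nonneg (by positivity : (0:ℤ) ≤ (n:ℤ)) (sub_nonneg.2 hn'), hn', hk',
    mul_nonneg (sub_nonneg.2 hk') (sub_nonneg.2 hk')]

/-- ratio lemma: `(n-4-(k-2)(k-4))·C(n-4,k-4) ≤ (n-4)·C(n-k-2,k-4)` -/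
lemma ratio {k n : ℕ} (hk : 4 ≤ k) (hn : 4*k^2 ≤ n) :
    (n-4-(k-2)*(k-4)) * Nat.choose (n-4) (k-4) ≤ (n-4) * Nat.choose (n-k-2) (k-4) := by
  have hkk : k*k + 4 ≤ n := by nlinarith
  have hkn : 2*k + 8 ≤ n := by nlinarith
  rcases Nat.eq_or_lt_of_le hk with h4 | h5
  · subst h4; simp
  · -- k ≥ 5
    have hc : (k-2)*(k-4) ≤ n - 4 := by
      have : (k-2)*(k-4) ≤ k*k := Nat.mul_le_mul (by omega) (by omega)
      omega
    have htu := tu (n-k-2) (k-5) (k-3)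
    have e1 : n-k-2 + (k-3+1) = n-4 := by omega
    have e2 : k-5+1 = k-4 := by omega
    have e3 : n-k-2 + (k-3) = n-5 := by omega
    have e4 : k-3+1 = k-2 := by omega
    rw [e1, e2, e3, e4] at htu
    have hid : (n-4) * Nat.choose (n-5) (k-5) = Nat.choose (n-4) (k-4) * (k-4) := by
      have h := Nat.add_one_mul_choose_eq (n-5) (k-5)
      have e5 : n-5+1 = n-4 := by omega
      have e6 : k-5+1 = k-4 := by omega
      rw [e5, e6] at h
      exact h
    have key : (n-4) * Nat.choose (n-4) (k-4) ≤ (n-4) * Nat.choose (n-k-2) (k-4) + (k-2)*(k-4) * Nat.choose (n-4) (k-4) := by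
      calc (n-4) * Nat.choose (n-4) (k-4) ≤ (n-4) * (Nat.choose (n-k-2) (k-4) + (k-2)*Nat.choose (n-5) (k-5)) :=
            Nat.mul_le_mul_left _ htu
      _ = (n-4) * Nat.choose (n-k-2) (k-4) + (k-2)*((n-4) * Nat.choose (n-5) (k-5)) := by ring
      _ = (n-4) * Nat.choose (n-k-2) (k-4) + (k-2)*(Nat.choose (n-4) (k-4) * (k-4)) := by rw [hid]
      _ = (n-4) * Nat.choose (n-k-2) (k-4) + (k-2)*(k-4) * Nat.choose (n-4) (k-4) := by ring
    have hsplit : (n-4-(k-2)*(k-4)) + (k-2)*(k-4) = n-4 := by omega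
    have h7 : (n-4-(k-2)*(k-4)) * Nat.choose (n-4) (k-4) + (k-2)*(k-4) * Nat.choose (n-4) (k-4)
        ≤ (n-4) * Nat.choose (n-k-2) (k-4) + (k-2)*(k-4) * Nat.choose (n-4) (k-4) := by
      rw [← add_mul, hsplit]; exact key
    exact Nat.le_of_add_le_add_right h7

/-- master inequality -/
lemma master {k n : ℕ} (c m' : ℕ) (hk : 4 ≤ k) (hn : 4*k^2 ≤ n)
    (hpoly : c * ((k-3)*(n-4)) ≤ m' * ((n-2*k+2) * (n-4-(k-2)*(k-4)))) :
    c * Nat.choose (n-4) (k-4) ≤ m' * Nat.choose (n-k-2) (k-3) := by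
  have hkk : k*k + 4 ≤ n := by nlinarith
  have hkn : 2*k + 8 ≤ n := by nlinarith
  have hid : Nat.choose (n-k-2) (k-3) * (k-3) = Nat.choose (n-k-2) (k-4) * (n-2*k+2) := by
    have h := Nat.choose_succ_right_eq (n-k-2) (k-4)
    have e1 : k-4+1 = k-3 := by omega
    have e2 : n-k-2 - (k-4) = n-2*k+2 := by omega
    rw [e1, e2] at h
    exact h
  have hpos : 0 < (k-3)*(n-4) := Nat.mul_pos (by omega) (by omega)
  refine Nat.le_of_mul_le_mul_left ?_ hpos
  calc (k-3)*(n-4) * (c * Nat.choose (n-4) (k-4))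
      = (c * ((k-3)*(n-4))) * Nat.choose (n-4) (k-4) := by ring
    _ ≤ (m' * ((n-2*k+2) * (n-4-(k-2)*(k-4)))) * Nat.choose (n-4) (k-4) :=
        Nat.mul_le_mul_right _ hpoly
    _ = (m' * (n-2*k+2)) * ((n-4-(k-2)*(k-4)) * Nat.choose (n-4) (k-4)) := by ring
    _ ≤ (m' * (n-2*k+2)) * ((n-4) * Nat.choose (n-k-2) (k-4)) :=
        Nat.mul_le_mul_left _ (ratio hk hn)
    _ = (m' * (n-4)) * (Nat.choose (n-k-2) (k-4) * (n-2*k+2)) := by ring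
    _ = (m' * (n-4)) * (Nat.choose (n-k-2) (k-3) * (k-3)) := by rw [hid]
    _ = (k-3)*(n-4) * (m' * Nat.choose (n-k-2) (k-3)) := by ring


/-- Count of members of a k-uniform family containing a fixed set `D`. -/
lemma count_sup (huni : ∀ A ∈ F, A.card = k) (D : Finset (Fin n)) :
    (F.filter (fun S => D ⊆ S)).card ≤ Nat.choose (n - D.card) (k - D.card) := by
  have h := Finset.card_le_card_of_injOn (fun S => S \ D)
    (s := F.filter (fun S => D ⊆ S))
    (t := Finset.powersetCard (k - D.card) (Finset.univ \ D)) ?_ ?_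
  · rwa [Finset.card_powersetCard, Finset.card_sdiff_of_subset (Finset.subset_univ D),
      Finset.card_univ, Fintype.card_fin] at h
  · intro S hS
    rw [Finset.mem_coe, Finset.mem_filter] at hS
    rw [Finset.mem_coe, Finset.mem_powersetCard]
    refine ⟨fun x hx => ?_, ?_⟩
    · rw [Finset.mem_sdiff] at hx ⊢; exact ⟨Finset.mem_univ x, hx.2⟩
    · rw [Finset.card_sdiff_of_subset hS.2, huni S hS.1]
  · intro S hS T hT hST
    simp only [Finset.coe_filter, Set.mem_setOf_eq] at hS hT
    have hST' : S \ D = T \ D := hST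
    have h2 : S \ D ∪ D = T \ D ∪ D := by rw [hST']
    rwa [Finset.sdiff_union_of_subset hS.2, Finset.sdiff_union_of_subset hT.2] at h2

/-- Same, avoiding one extra point. -/
lemma count_sup_avoid (huni : ∀ A ∈ F, A.card = k) (D : Finset (Fin n)) (x : Fin n) (hx : x ∉ D) :
    (F.filter (fun S => D ⊆ S ∧ x ∉ S)).card ≤ Nat.choose (n - D.card - 1) (k - D.card) := by
  have h := Finset.card_le_card_of_injOn (fun S => S \ D)
    (s := F.filter (fun S => D ⊆ S ∧ x ∉ S))
    (t := Finset.powersetCard (k - D.card) ((Finset.univ \ D).erase x)) ?_ ?_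
  · rwa [Finset.card_powersetCard, Finset.card_erase_of_mem
      (by rw [Finset.mem_sdiff]; exact ⟨Finset.mem_univ x, hx⟩),
      Finset.card_sdiff_of_subset (Finset.subset_univ D), Finset.card_univ, Fintype.card_fin] at h
  · intro S hS
    rw [Finset.mem_coe, Finset.mem_filter] at hS
    rw [Finset.mem_coe, Finset.mem_powersetCard]
    refine ⟨fun a ha => ?_, ?_⟩
    · rw [Finset.mem_sdiff] at ha
      rw [Finset.mem_erase, Finset.mem_sdiff]
      exact ⟨fun hax => hS.2.2 (hax ▸ ha.1), Finset.mem_univ a, ha.2⟩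
    · rw [Finset.card_sdiff_of_subset hS.2.1, huni S hS.1]
  · intro S hS T hT hST
    simp only [Finset.coe_filter, Set.mem_setOf_eq] at hS hT
    have hST' : S \ D = T \ D := hST
    have h2 : S \ D ∪ D = T \ D ∪ D := by rw [hST']
    rwa [Finset.sdiff_union_of_subset hS.2.1, Finset.sdiff_union_of_subset hT.2.1] at h2

/-- Count of k-sets containing z,x, avoiding y, and hitting W. -/
lemma count_hitW (huni : ∀ A ∈ F, A.card = k) {z x y : Fin n} (W : Finset (Fin n))
    (hWx : x ∉ W) (hWy : y ∉ W) (hWz : z ∉ W)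
    (hzx : z ≠ x) (hzy : z ≠ y) (hxy : x ≠ y) :
    (F.filter (fun S => z ∈ S ∧ x ∈ S ∧ y ∉ S ∧ (S ∩ W).Nonempty)).card
      + Nat.choose (n - 3 - W.card) (k-2) ≤ Nat.choose (n-3) (k-2) := by
  classical
  set P : Finset (Fin n) := Finset.univ \ {x, y, z} with hP
  have hPcard : P.card = n - 3 := by
    rw [hP, Finset.card_sdiff_of_subset (Finset.subset_univ _), Finset.card_univ, Fintype.card_fin]
    congr 1
    rw [Finset.card_insert_of_notMem (by simp [hxy, Ne.symm hzx]),
      Finset.card_insert_of_notMem (by simp [hzy.symm]), Finset.card_singleton]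
  have hWP : W ⊆ P := by
    intro w hw
    rw [hP, Finset.mem_sdiff]
    refine ⟨Finset.mem_univ w, ?_⟩
    simp only [Finset.mem_insert, Finset.mem_singleton]
    push_neg
    exact ⟨fun h => hWx (h ▸ hw), fun h => hWy (h ▸ hw), fun h => hWz (h ▸ hw)⟩
  set Hit := (Finset.powersetCard (k-2) P).filter (fun T => (T ∩ W).Nonempty) with hHit
  have hsplit : Hit.card + ((Finset.powersetCard (k-2) P).filter
      (fun T => ¬ (T ∩ W).Nonempty)).card = Nat.choose (n-3) (k-2) := by
    rw [hHit, Finset.card_filter_add_card_filter_not,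
      Finset.card_powersetCard, hPcard]
  have hNo : ((Finset.powersetCard (k-2) P).filter (fun T => ¬ (T ∩ W).Nonempty))
      = Finset.powersetCard (k-2) (P \ W) := by
    ext T
    simp only [Finset.mem_filter, Finset.mem_powersetCard, Finset.not_nonempty_iff_eq_empty]
    constructor
    · rintro ⟨⟨hTP, hTc⟩, hTW⟩
      refine ⟨Finset.subset_sdiff.2 ⟨hTP, ?_⟩, hTc⟩
      rw [Finset.disjoint_iff_inter_eq_empty]; exact hTW
    · rintro ⟨hT, hTc⟩
      rw [Finset.subset_sdiff] at hT
      refine ⟨⟨hT.1, hTc⟩, ?_⟩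
      rw [← Finset.disjoint_iff_inter_eq_empty]; exact hT.2
  have hNocard : ((Finset.powersetCard (k-2) P).filter (fun T => ¬ (T ∩ W).Nonempty)).card
      = Nat.choose (n - 3 - W.card) (k-2) := by
    rw [hNo, Finset.card_powersetCard, Finset.card_sdiff_of_subset hWP, hPcard]
  have hinj : (F.filter (fun S => z ∈ S ∧ x ∈ S ∧ y ∉ S ∧ (S ∩ W).Nonempty)).card ≤ Hit.card := by
    apply Finset.card_le_card_of_injOn (fun S => S \ {z, x})
    · intro S hS
      rw [Finset.mem_coe, Finset.mem_filter] at hS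
      obtain ⟨hSF, hz, hx, hy, hw⟩ := hS
      rw [hHit, Finset.mem_coe, Finset.mem_filter, Finset.mem_powersetCard]
      have hsub : ({z, x} : Finset (Fin n)) ⊆ S := by
        intro a ha; simp only [Finset.mem_insert, Finset.mem_singleton] at ha
        rcases ha with h | h <;> subst h <;> assumption
      refine ⟨⟨fun a ha => ?_, ?_⟩, ?_⟩
      · rw [Finset.mem_sdiff] at ha
        simp only [Finset.mem_insert, Finset.mem_singleton, not_or] at ha
        rw [hP, Finset.mem_sdiff]
        refine ⟨Finset.mem_univ a, ?_⟩
        simp only [Finset.mem_insert, Finset.mem_singleton]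
        push_neg
        exact ⟨ha.2.2, fun h => hy (h ▸ ha.1), ha.2.1⟩
      · rw [Finset.card_sdiff_of_subset hsub, huni S hSF]
        congr 1
        rw [Finset.card_insert_of_notMem (by simp [hzx]), Finset.card_singleton]
      · obtain ⟨w, hwm⟩ := hw
        rw [Finset.mem_inter] at hwm
        refine ⟨w, Finset.mem_inter.2 ⟨?_, hwm.2⟩⟩
        rw [Finset.mem_sdiff]
        refine ⟨hwm.1, ?_⟩
        simp only [Finset.mem_insert, Finset.mem_singleton]
        push_neg
        exact ⟨fun h => hWz (h ▸ hwm.2), fun h => hWx (h ▸ hwm.2)⟩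
    · intro S hS T hT hST
      simp only [Finset.coe_filter, Set.mem_setOf_eq] at hS hT
      have hsubS : ({z, x} : Finset (Fin n)) ⊆ S := by
        intro a ha; simp only [Finset.mem_insert, Finset.mem_singleton] at ha
        rcases ha with h | h <;> subst h
        · exact hS.2.1
        · exact hS.2.2.1
      have hsubT : ({z, x} : Finset (Fin n)) ⊆ T := by
        intro a ha; simp only [Finset.mem_insert, Finset.mem_singleton] at ha
        rcases ha with h | h <;> subst h
        · exact hT.2.1
        · exact hT.2.2.1
      have hST' : S \ {z,x} = T \ {z,x} := hST
      have h2 : S \ {z,x} ∪ {z,x} = T \ {z,x} ∪ {z,x} := by rw [hST']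
      rwa [Finset.sdiff_union_of_subset hsubS, Finset.sdiff_union_of_subset hsubT] at h2
  omega


lemma pinned (hint : ∀ A ∈ F, ∀ B ∈ F, (A ∩ B).Nonempty) (huni : ∀ A ∈ F, A.card = k)
    {t : ℕ} (hno : ∀ U : Finset (Fin n), U.card < t → ∃ S ∈ F, S ∩ U = ∅) :
    ∀ j (D : Finset (Fin n)), D.card + j = t →
      (F.filter (fun S => D ⊆ S)).card ≤ k ^ j * Nat.choose (n - t) (k - t)
  | 0, D, hD => by
      have h := count_sup huni D
      rw [show D.card = t from by omega] at h
      simpa using h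
  | (j+1), D, hD => by
      obtain ⟨B, hBF, hBD⟩ := hno D (by omega)
      have hsub : F.filter (fun S => D ⊆ S) ⊆
          B.biUnion (fun w => F.filter (fun S => insert w D ⊆ S)) := by
        intro S hS
        rw [Finset.mem_filter] at hS
        obtain ⟨w, hw⟩ := hint S hS.1 B hBF
        rw [Finset.mem_inter] at hw
        rw [Finset.mem_biUnion]
        exact ⟨w, hw.2, Finset.mem_filter.2 ⟨hS.1, Finset.insert_subset hw.1 hS.2⟩⟩
      calc (F.filter (fun S => D ⊆ S)).card
          ≤ (B.biUnion (fun w => F.filter (fun S => insert w D ⊆ S))).card :=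
            Finset.card_le_card hsub
        _ ≤ ∑ w ∈ B, (F.filter (fun S => insert w D ⊆ S)).card := Finset.card_biUnion_le
        _ ≤ ∑ _w ∈ B, k ^ j * Nat.choose (n-t) (k-t) := by
            apply Finset.sum_le_sum
            intro w hwB
            have hwD : w ∉ D := by
              intro hwD
              have hm : w ∈ B ∩ D := Finset.mem_inter.2 ⟨hwB, hwD⟩
              rw [hBD] at hm; exact absurd hm (Finset.notMem_empty w)
            exact pinned hint huni hno j (insert w D)
              (by rw [Finset.card_insert_of_notMem hwD]; omega)
        _ = k ^ (j+1) * Nat.choose (n-t) (k-t) := by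
            rw [Finset.sum_const, smul_eq_mul, huni B hBF, pow_succ]; ring


lemma desc (hk : 4 ≤ k) (hn : 4*k^2 ≤ n) :
    ∀ t, 4 ≤ t → t ≤ k →
      t * k ^ (t-1) * Nat.choose (n-t) (k-t) ≤ 4 * k ^ 3 * Nat.choose (n-4) (k-4) := by
  intro t ht
  induction t, ht using Nat.le_induction with
  | base => intro _; norm_num
  | succ t ht IH =>
      intro htk1
      have htk : t ≤ k := by omega
      have IH' := IH htk
      refine le_trans ?_ IH'
      -- (t+1) * k^t * C(n-(t+1),k-(t+1)) ≤ t * k^(t-1) * C(n-t,k-t)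
      have hkn : 2*k + 8 ≤ n := by nlinarith
      have hkk : 2*(k*k) + k ≤ n := by nlinarith
      have hid : (n-t) * Nat.choose (n-t-1) (k-t-1) = Nat.choose (n-t) (k-t) * (k-t) := by
        have h := Nat.add_one_mul_choose_eq (n-t-1) (k-t-1)
        have e5 : n-t-1+1 = n-t := by omega
        have e6 : k-t-1+1 = k-t := by omega
        rw [e5, e6] at h
        exact h
      have e7 : n-(t+1) = n-t-1 := by omega
      have e8 : k-(t+1) = k-t-1 := by omega
      have e9 : t+1-1 = t := by omega
      have e10 : t-1+1 = t := by omega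
      rw [e7, e8, e9]
      have hpos : 0 < n - t := by omega
      refine Nat.le_of_mul_le_mul_left ?_ hpos
      calc (n-t) * ((t+1) * k ^ t * Nat.choose (n-t-1) (k-t-1))
          = (t+1) * k ^ t * ((n-t) * Nat.choose (n-t-1) (k-t-1)) := by ring
        _ = (t+1) * k ^ t * (Nat.choose (n-t) (k-t) * (k-t)) := by rw [hid]
        _ = ((t+1) * k * (k-t)) * (k ^ (t-1) * Nat.choose (n-t) (k-t)) := by
            rw [show k ^ t = k * k ^ (t-1) from by rw [← pow_succ']; congr 1; omega]
            ring
        _ ≤ (t * (n-t)) * (k ^ (t-1) * Nat.choose (n-t) (k-t)) := by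
            apply Nat.mul_le_mul_right
            -- (t+1)*k*(k-t) ≤ t*(n-t)
            have h1 : (t+1) * k * (k-t) ≤ 2*t*(k*k) := by
              have : k - t ≤ k := by omega
              calc (t+1) * k * (k-t) ≤ (2*t) * k * k := by
                    apply Nat.mul_le_mul (Nat.mul_le_mul (by omega) (le_refl k)) this
              _ = 2*t*(k*k) := by ring
            have h2 : 2*(k*k) ≤ n - t := by omega
            calc (t+1) * k * (k-t) ≤ 2*t*(k*k) := h1
              _ = t * (2*(k*k)) := by ring
              _ ≤ t * (n-t) := Nat.mul_le_mul_left _ h2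
        _ = (n-t) * (t * k ^ (t-1) * Nat.choose (n-t) (k-t)) := by ring


lemma total_degree : ∑ z : Fin n, (F.filter (fun S => z ∈ S)).card = ∑ S ∈ F, S.card := by
  simp_rw [Finset.card_filter]
  rw [Finset.sum_comm]
  refine Finset.sum_congr rfl (fun S _ => ?_)
  rw [Finset.sum_ite_mem, Finset.univ_inter, Finset.sum_const, smul_eq_mul, mul_one]


/-- final step: from `d ≤ k·C(n-k-2,k-3)` conclude. -/
lemma final_step (hk : 4 ≤ k) (hn : 4*k^2 ≤ n) {d : ℕ}
    (hd : d ≤ k * Nat.choose (n-k-2) (k-3)) :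
    d + Nat.choose (n-k-2) (k-2) ≤ Nat.choose (n-2) (k-2) := by
  have hkn : 2*k + 8 ≤ n := by nlinarith
  have h := tl (n-k-2) (k-3) k
  have e1 : k-3+1 = k-2 := by omega
  have e2 : n-k-2+k = n-2 := by omega
  rw [e1, e2] at h
  omega

/-- arithmetic for the τ=2 one-sided case -/
lemma arith_side (hk : 4 ≤ k) (hn : 4*k^2 ≤ n) {s : ℕ} (hs1 : 1 ≤ s) (hs2 : s ≤ k-2) :
    (k-1-s) * ((k-1) * Nat.choose (n-4) (k-4)) + Nat.choose (n-s-3) (k-s-2)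
      ≤ (k-1-s) * Nat.choose (n-k-2) (k-3) := by
  have hkk : 4*(k*k) ≤ n := by nlinarith
  have hk4 : 4*k ≤ k*k := Nat.mul_le_mul_right k hk
  set E := Nat.choose (n-4) (k-4) with hE
  set Q := Nat.choose (n-k-2) (k-3) with hQ
  have hkE : k * E ≤ Q := by
    have := master (k := k) (n := n) k 1 hk hn ?_
    · simpa using this
    · calc k * ((k-3)*(n-4)) ≤ 3*k*((k-3)*(n-4)) := by
            apply Nat.mul_le_mul_right; omega
        _ ≤ 1 * ((n-2*k+2)*(n-4-(k-2)*(k-4))) := by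
            rw [one_mul]; exact polycore hk hn
  rcases Nat.eq_or_lt_of_le hs1 with h1 | h2
  · -- s = 1
    subst h1
    have hkn : 2*k + 8 ≤ n := by nlinarith
    have htu := tu (n-k-2) (k-4) (k-3)
    have e1 : n-k-2 + (k-3+1) = n-4 := by omega
    have e2 : k-4+1 = k-3 := by omega
    have e3 : n-k-2 + (k-3) = n-5 := by omega
    have e4 : k-3+1 = k-2 := by omega
    rw [e1, e2, e3, e4] at htu
    have hc5 : Nat.choose (n-5) (k-4) ≤ E := Nat.choose_le_choose _ (by omega)
    have h6 : Nat.choose (n-4) (k-3) ≤ Q + (k-2)*E := by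
      calc Nat.choose (n-4) (k-3) ≤ Q + (k-2) * Nat.choose (n-5) (k-4) := htu
        _ ≤ Q + (k-2)*E := by
            have := Nat.mul_le_mul_left (k-2) hc5
            omega
    have hP1 : (k*(k-2)) * E ≤ (k-3)*Q := by
      apply master _ _ hk hn
      calc (k*(k-2)) * ((k-3)*(n-4)) = (k*((k-3)*(n-4))) * (k-2) := by ring
        _ ≤ (k*((k-3)*(n-4))) * (3*(k-3)) := Nat.mul_le_mul_left _ (by omega)
        _ = (k-3) * (3*k*((k-3)*(n-4))) := by ring
        _ ≤ (k-3) * ((n-2*k+2)*(n-4-(k-2)*(k-4))) := Nat.mul_le_mul_left _ (polycore hk hn)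
    have eE : (k-1)*E + E = k*E := by
      have e5 : k-1+1 = k := by omega
      calc (k-1) * E + E = ((k-1)+1) * E := by ring
        _ = k * E := by rw [e5]
    have eQ : (k-3)*Q + Q = (k-2)*Q := by
      have e5 : k-3+1 = k-2 := by omega
      calc (k-3)*Q + Q = ((k-3)+1) * Q := by ring
        _ = (k-2)*Q := by rw [e5]
    have egoal1 : n-1-3 = n-4 := by omega
    have egoal2 : k-1-2 = k-3 := by omega
    have egoal0 : k-1-1 = k-2 := by omega
    rw [egoal0, egoal1, egoal2]
    calc (k-2) * ((k-1) * E) + Nat.choose (n-4) (k-3)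
        ≤ (k-2) * ((k-1) * E) + (Q + (k-2)*E) := by omega
      _ = (k-2) * ((k-1)*E + E) + Q := by ring
      _ = (k-2) * (k*E) + Q := by rw [eE]
      _ = (k*(k-2)) * E + Q := by ring
      _ ≤ (k-3)*Q + Q := by omega
      _ = (k-2)*Q := eQ
  · -- s ≥ 2
    have hdiag : Nat.choose (n-s-3) (k-s-2) ≤ E := by
      have h := diag (n-s-3) (k-s-2) (s-2)
      have e1 : n-s-3 + (s-2) = n-5 := by omega
      have e2 : k-s-2 + (s-2) = k-4 := by omega
      rw [e1, e2] at h
      calc Nat.choose (n-s-3) (k-s-2) ≤ Nat.choose (n-5) (k-4) := h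
        _ ≤ E := Nat.choose_le_choose _ (by omega)
    have hm : 1 ≤ k-1-s := by omega
    calc (k-1-s) * ((k-1) * E) + Nat.choose (n-s-3) (k-s-2)
        ≤ (k-1-s) * ((k-1) * E) + (k-1-s) * E := by
          have : Nat.choose (n-s-3) (k-s-2) ≤ (k-1-s) * E := by
            calc Nat.choose (n-s-3) (k-s-2) ≤ E := hdiag
              _ = 1 * E := (one_mul E).symm
              _ ≤ (k-1-s) * E := Nat.mul_le_mul_right E hm
          omega
      _ = (k-1-s) * (k * E) := by
          have e3 : (k-1) * E + E = k * E := by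
            have : k-1+1 = k := by omega
            calc (k-1) * E + E = ((k-1)+1) * E := by ring
              _ = k * E := by rw [this]
          calc (k-1-s) * ((k-1) * E) + (k-1-s) * E = (k-1-s) * ((k-1)*E + E) := by ring
            _ = (k-1-s) * (k * E) := by rw [e3]
      _ ≤ (k-1-s) * Q := Nat.mul_le_mul_left _ hkE


/-- Case τ ≥ 4. -/
lemma case4 (hk : 4 ≤ k) (hn : 4*k^2 ≤ n)
    (huni : ∀ A ∈ F, A.card = k) (hint : ∀ A ∈ F, ∀ B ∈ F, (A ∩ B).Nonempty)
    {t : ℕ} (ht4 : 4 ≤ t) (htk : t ≤ k)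
    (C0 : Finset (Fin n)) (hC0 : C0.card = t) (hcov : ∀ S ∈ F, (S ∩ C0).Nonempty)
    (hno : ∀ V : Finset (Fin n), V.card < t → ∃ S ∈ F, S ∩ V = ∅) :
    ∃ z : Fin n, (F.filter (fun S => z ∈ S)).card + Nat.choose (n-k-2) (k-2)
      ≤ Nat.choose (n-2) (k-2) := by
  classical
  have hn0 : 0 < n := by nlinarith
  -- |F| ≤ t * k^(t-1) * C(n-t,k-t)
  have hFsub : F ⊆ C0.biUnion (fun u => F.filter (fun S => {u} ⊆ S)) := by
    intro S hS
    obtain ⟨u, hu⟩ := hcov S hS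
    rw [Finset.mem_inter] at hu
    rw [Finset.mem_biUnion]
    exact ⟨u, hu.2, Finset.mem_filter.2 ⟨hS, Finset.singleton_subset_iff.2 hu.1⟩⟩
  have hFcard : F.card ≤ t * (k ^ (t-1) * Nat.choose (n-t) (k-t)) := by
    calc F.card ≤ (C0.biUnion (fun u => F.filter (fun S => {u} ⊆ S))).card :=
          Finset.card_le_card hFsub
      _ ≤ ∑ u ∈ C0, (F.filter (fun S => {u} ⊆ S)).card := Finset.card_biUnion_le
      _ ≤ ∑ _u ∈ C0, k ^ (t-1) * Nat.choose (n-t) (k-t) := by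
          apply Finset.sum_le_sum
          intro u _
          exact pinned hint huni hno (t-1) {u} (by rw [Finset.card_singleton]; omega)
      _ = t * (k ^ (t-1) * Nat.choose (n-t) (k-t)) := by
          rw [Finset.sum_const, smul_eq_mul, hC0]
  have hF4 : F.card ≤ 4 * k^3 * Nat.choose (n-4) (k-4) := by
    have := desc hk hn t ht4 htk
    calc F.card ≤ t * (k ^ (t-1) * Nat.choose (n-t) (k-t)) := hFcard
      _ = t * k ^ (t-1) * Nat.choose (n-t) (k-t) := by ring
      _ ≤ 4 * k^3 * Nat.choose (n-4) (k-4) := this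
  -- pick min degree vertex
  obtain ⟨z, _, hzmin⟩ := Finset.exists_min_image Finset.univ
    (fun z => (F.filter (fun S => z ∈ S)).card) ⟨⟨0, hn0⟩, Finset.mem_univ _⟩
  refine ⟨z, ?_⟩
  have havg : n * (F.filter (fun S => z ∈ S)).card ≤ k * F.card := by
    have h1 : Finset.univ.card • (F.filter (fun S => z ∈ S)).card
        ≤ ∑ w : Fin n, (F.filter (fun S => w ∈ S)).card :=
      Finset.card_nsmul_le_sum _ _ _ (fun w _ => hzmin w (Finset.mem_univ w))
    rw [Finset.card_univ, Fintype.card_fin, smul_eq_mul] at h1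
    rw [total_degree] at h1
    calc n * (F.filter (fun S => z ∈ S)).card ≤ ∑ S ∈ F, S.card := h1
      _ = ∑ _S ∈ F, k := Finset.sum_congr rfl (fun S hS => huni S hS)
      _ = k * F.card := by rw [Finset.sum_const, smul_eq_mul]; ring
  -- master: 4k⁴·E₀ ≤ (n·k)·Q
  have hmaster : 4*k^4 * Nat.choose (n-4) (k-4) ≤ (n*k) * Nat.choose (n-k-2) (k-3) := by
    apply master _ _ hk hn
    have hcore := polycore hk hn
    calc 4*k^4 * ((k-3)*(n-4)) = (4*k^2) * (k^2 * ((k-3)*(n-4))) := by ring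
      _ ≤ n * (k^2 * ((k-3)*(n-4))) := Nat.mul_le_mul_right _ hn
      _ = (n*k) * (k * ((k-3)*(n-4))) := by ring
      _ ≤ (n*k) * (3*k*((k-3)*(n-4))) := Nat.mul_le_mul_left _ (Nat.mul_le_mul_right _ (by omega))
      _ ≤ (n*k) * ((n-2*k+2)*(n-4-(k-2)*(k-4))) := Nat.mul_le_mul_left _ hcore
  have hdz : (F.filter (fun S => z ∈ S)).card ≤ k * Nat.choose (n-k-2) (k-3) := by
    have h2 : n * (F.filter (fun S => z ∈ S)).card ≤ n * (k * Nat.choose (n-k-2) (k-3)) := by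
      calc n * (F.filter (fun S => z ∈ S)).card ≤ k * F.card := havg
        _ ≤ k * (4*k^3 * Nat.choose (n-4) (k-4)) := Nat.mul_le_mul_left _ hF4
        _ = 4*k^4 * Nat.choose (n-4) (k-4) := by ring
        _ ≤ (n*k) * Nat.choose (n-k-2) (k-3) := hmaster
        _ = n * (k * Nat.choose (n-k-2) (k-3)) := by ring
    exact Nat.le_of_mul_le_mul_left h2 hn0
  exact final_step hk hn hdz


/-- Case τ = 3. -/
lemma case3 (hk : 4 ≤ k) (hn : 4*k^2 ≤ n)
    (huni : ∀ A ∈ F, A.card = k) (hint : ∀ A ∈ F, ∀ B ∈ F, (A ∩ B).Nonempty)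
    (C3 : Finset (Fin n)) (hC3 : C3.card = 3) (hcov : ∀ S ∈ F, (S ∩ C3).Nonempty)
    (hno : ∀ V : Finset (Fin n), V.card < 3 → ∃ S ∈ F, S ∩ V = ∅) :
    ∃ z : Fin n, (F.filter (fun S => z ∈ S)).card + Nat.choose (n-k-2) (k-2)
      ≤ Nat.choose (n-2) (k-2) := by
  classical
  have hkk : 4*(k*k) ≤ n := by nlinarith
  have hk4 : 4*k ≤ k*k := Nat.mul_le_mul_right k hk
  have h1 : ∀ u : Fin n, ∃ B, B ∈ F ∧ u ∉ B := by
    intro u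
    obtain ⟨S, hS, hSu⟩ := hno {u} (by simp)
    refine ⟨S, hS, fun hu => ?_⟩
    have hm : u ∈ S ∩ {u} := by simp [hu]
    rw [hSu] at hm; exact absurd hm (Finset.notMem_empty u)
  choose B₁ hB₁F hB₁u using h1
  have h2 : ∀ u w : Fin n, ∃ B, B ∈ F ∧ u ∉ B ∧ w ∉ B := by
    intro u w
    obtain ⟨S, hS, hSuw⟩ := hno {u, w}
      (lt_of_le_of_lt (Finset.card_insert_le u {w}) (by simp))
    refine ⟨S, hS, fun hu => ?_, fun hw => ?_⟩
    · have hm : u ∈ S ∩ {u, w} := by simp [hu]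
      rw [hSuw] at hm; exact absurd hm (Finset.notMem_empty u)
    · have hm : w ∈ S ∩ {u, w} := by simp [hw]
      rw [hSuw] at hm; exact absurd hm (Finset.notMem_empty w)
  choose B₂ hB₂F hB₂u hB₂w using h2
  set Avoid := (C3 ∪ C3.biUnion B₁) ∪
      C3.biUnion (fun u => (B₁ u).biUnion (fun w => B₂ u w)) with hAv
  have hAvcard : Avoid.card < n := by
    rw [hAv]
    have c1 : (C3.biUnion B₁).card ≤ 3*k := by
      calc (C3.biUnion B₁).card ≤ ∑ u ∈ C3, (B₁ u).card := Finset.card_biUnion_le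
        _ = ∑ _u ∈ C3, k := Finset.sum_congr rfl (fun u _ => huni _ (hB₁F u))
        _ = 3*k := by rw [Finset.sum_const, smul_eq_mul, hC3]
    have c2 : (C3.biUnion (fun u => (B₁ u).biUnion (fun w => B₂ u w))).card ≤ 3*(k*k) := by
      calc (C3.biUnion (fun u => (B₁ u).biUnion (fun w => B₂ u w))).card
          ≤ ∑ u ∈ C3, ((B₁ u).biUnion (fun w => B₂ u w)).card := Finset.card_biUnion_le
        _ ≤ ∑ u ∈ C3, (k*k) := by
            apply Finset.sum_le_sum
            intro u _
            calc ((B₁ u).biUnion (fun w => B₂ u w)).card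
                ≤ ∑ w ∈ B₁ u, (B₂ u w).card := Finset.card_biUnion_le
              _ = ∑ _w ∈ B₁ u, k := Finset.sum_congr rfl (fun w _ => huni _ (hB₂F u w))
              _ = k*k := by rw [Finset.sum_const, smul_eq_mul, huni _ (hB₁F u)]
        _ = 3*(k*k) := by rw [Finset.sum_const, smul_eq_mul, hC3]
    have := Finset.card_union_le (C3 ∪ C3.biUnion B₁)
      (C3.biUnion (fun u => (B₁ u).biUnion (fun w => B₂ u w)))
    have := Finset.card_union_le C3 (C3.biUnion B₁)
    omega
  obtain ⟨z, hz⟩ : ∃ z : Fin n, z ∉ Avoid := by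
    by_contra h; push_neg at h
    have hsub : Finset.univ ⊆ Avoid := fun w _ => h w
    have := Finset.card_le_card hsub
    rw [Finset.card_univ, Fintype.card_fin] at this; omega
  have hzC3 : z ∉ C3 := fun h => hz (by rw [hAv]; exact Finset.mem_union_left _ (Finset.mem_union_left _ h))
  have hzB₁ : ∀ u ∈ C3, z ∉ B₁ u := fun u hu h => hz (by
    rw [hAv]; exact Finset.mem_union_left _ (Finset.mem_union_right _ (Finset.mem_biUnion.2 ⟨u, hu, h⟩)))
  have hzB₂ : ∀ u ∈ C3, ∀ w ∈ B₁ u, z ∉ B₂ u w := fun u hu w hw h => hz (by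
    rw [hAv]; exact Finset.mem_union_right _
      (Finset.mem_biUnion.2 ⟨u, hu, Finset.mem_biUnion.2 ⟨w, hw, h⟩⟩))
  refine ⟨z, ?_⟩
  have hdz : (F.filter (fun S => z ∈ S)).card ≤ 3*(k*k) * Nat.choose (n-4) (k-4) := by
    have hsub : F.filter (fun S => z ∈ S) ⊆
        C3.biUnion (fun u => (B₁ u).biUnion (fun w => (B₂ u w).biUnion (fun v =>
          F.filter (fun S => ({z,u,w,v} : Finset (Fin n)) ⊆ S)))) := by
      intro S hS
      rw [Finset.mem_filter] at hS
      obtain ⟨hSF, hzS⟩ := hS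
      obtain ⟨u, hu⟩ := hcov S hSF; rw [Finset.mem_inter] at hu
      obtain ⟨w, hw⟩ := hint S hSF (B₁ u) (hB₁F u); rw [Finset.mem_inter] at hw
      obtain ⟨v, hv⟩ := hint S hSF (B₂ u w) (hB₂F u w); rw [Finset.mem_inter] at hv
      simp only [Finset.mem_biUnion]
      refine ⟨u, hu.2, w, hw.2, v, hv.2, Finset.mem_filter.2 ⟨hSF, ?_⟩⟩
      intro a ha
      simp only [Finset.mem_insert, Finset.mem_singleton] at ha
      rcases ha with rfl|rfl|rfl|rfl
      exacts [hzS, hu.1, hw.1, hv.1]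
    calc (F.filter (fun S => z ∈ S)).card
        ≤ (C3.biUnion (fun u => (B₁ u).biUnion (fun w => (B₂ u w).biUnion (fun v =>
            F.filter (fun S => ({z,u,w,v} : Finset (Fin n)) ⊆ S))))).card :=
          Finset.card_le_card hsub
      _ ≤ ∑ u ∈ C3, ((B₁ u).biUnion (fun w => (B₂ u w).biUnion (fun v =>
            F.filter (fun S => ({z,u,w,v} : Finset (Fin n)) ⊆ S)))).card :=
          Finset.card_biUnion_le
      _ ≤ ∑ u ∈ C3, (k*k) * Nat.choose (n-4) (k-4) := by
          apply Finset.sum_le_sum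
          intro u huC3
          calc ((B₁ u).biUnion (fun w => (B₂ u w).biUnion (fun v =>
                F.filter (fun S => ({z,u,w,v} : Finset (Fin n)) ⊆ S)))).card
              ≤ ∑ w ∈ B₁ u, ((B₂ u w).biUnion (fun v =>
                F.filter (fun S => ({z,u,w,v} : Finset (Fin n)) ⊆ S))).card :=
                Finset.card_biUnion_le
            _ ≤ ∑ w ∈ B₁ u, k * Nat.choose (n-4) (k-4) := by
                apply Finset.sum_le_sum
                intro w hwB₁
                calc ((B₂ u w).biUnion (fun v =>
                      F.filter (fun S => ({z,u,w,v} : Finset (Fin n)) ⊆ S))).card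
                    ≤ ∑ v ∈ B₂ u w, (F.filter (fun S => ({z,u,w,v} : Finset (Fin n)) ⊆ S)).card :=
                      Finset.card_biUnion_le
                  _ ≤ ∑ _v ∈ B₂ u w, Nat.choose (n-4) (k-4) := by
                      apply Finset.sum_le_sum
                      intro v hvB₂
                      have hcard : ({z,u,w,v} : Finset (Fin n)).card = 4 := by
                        have hzu : z ≠ u := fun h => hzC3 (h ▸ huC3)
                        have hzw : z ≠ w := fun h => hzB₁ u huC3 (h ▸ hwB₁)
                        have hzv : z ≠ v := fun h => hzB₂ u huC3 w hwB₁ (h ▸ hvB₂)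
                        have huw : u ≠ w := fun h => hB₁u u (h ▸ hwB₁)
                        have huv : u ≠ v := fun h => hB₂u u w (h ▸ hvB₂)
                        have hwv : w ≠ v := fun h => hB₂w u w (h ▸ hvB₂)
                        rw [Finset.card_insert_of_notMem (by simp [hzu, hzw, hzv]),
                          Finset.card_insert_of_notMem (by simp [huw, huv]),
                          Finset.card_insert_of_notMem (by simp [hwv]),
                          Finset.card_singleton]
                      have := count_sup huni ({z,u,w,v} : Finset (Fin n))
                      rwa [hcard] at this
                  _ = k * Nat.choose (n-4) (k-4) := by
                      rw [Finset.sum_const, smul_eq_mul, huni _ (hB₂F u w)]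
            _ = (k*k) * Nat.choose (n-4) (k-4) := by
                rw [Finset.sum_const, smul_eq_mul, huni _ (hB₁F u)]; ring
      _ = 3*(k*k) * Nat.choose (n-4) (k-4) := by
          rw [Finset.sum_const, smul_eq_mul, hC3]; ring
  have hmaster : 3*(k*k) * Nat.choose (n-4) (k-4) ≤ k * Nat.choose (n-k-2) (k-3) := by
    apply master _ _ hk hn
    calc 3*(k*k) * ((k-3)*(n-4)) = k * (3*k*((k-3)*(n-4))) := by ring
      _ ≤ k * ((n-2*k+2)*(n-4-(k-2)*(k-4))) := Nat.mul_le_mul_left _ (polycore hk hn)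
  exact final_step hk hn (le_trans hdz hmaster)


/-- one branch bound for the doubly-spread case -/
lemma branch_empty (huni : ∀ A ∈ F, A.card = k) (hint : ∀ A ∈ F, ∀ B ∈ F, (A ∩ B).Nonempty)
    {x y z : Fin n}
    {A₁ : Finset (Fin n)} (hA₁F : A₁ ∈ F) (hA₁y : y ∈ A₁) (hA₁x : x ∉ A₁)
    {A₂ : Fin n → Finset (Fin n)} (hA₂F : ∀ w, A₂ w ∈ F) (hA₂y : ∀ w, y ∈ A₂ w)
    (hA₂x : ∀ w, x ∉ A₂ w) (hA₂w : ∀ w, w ≠ y → w ∉ A₂ w)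
    (hzx : z ≠ x) (hzA₁ : z ∉ A₁) (hzA₂ : ∀ w ∈ A₁, z ∉ A₂ w) :
    (F.filter (fun S => z ∈ S ∧ x ∈ S ∧ y ∉ S)).card
      ≤ (k-1)*((k-1) * Nat.choose (n-4) (k-4)) := by
  classical
  have hsub : F.filter (fun S => z ∈ S ∧ x ∈ S ∧ y ∉ S) ⊆
      (A₁.erase y).biUnion (fun w => ((A₂ w).erase y).biUnion (fun v =>
        F.filter (fun S => ({z,x,w,v} : Finset (Fin n)) ⊆ S))) := by
    intro S hS
    rw [Finset.mem_filter] at hS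
    obtain ⟨hSF, hzS, hxS, hyS⟩ := hS
    obtain ⟨w, hw⟩ := hint S hSF A₁ hA₁F
    rw [Finset.mem_inter] at hw
    have hwy : w ≠ y := fun h => hyS (h ▸ hw.1)
    obtain ⟨v, hv⟩ := hint S hSF (A₂ w) (hA₂F w)
    rw [Finset.mem_inter] at hv
    have hvy : v ≠ y := fun h => hyS (h ▸ hv.1)
    simp only [Finset.mem_biUnion]
    exact ⟨w, Finset.mem_erase.2 ⟨hwy, hw.2⟩, v, Finset.mem_erase.2 ⟨hvy, hv.2⟩,
      Finset.mem_filter.2 ⟨hSF, by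
        intro a ha
        simp only [Finset.mem_insert, Finset.mem_singleton] at ha
        rcases ha with rfl|rfl|rfl|rfl
        exacts [hzS, hxS, hw.1, hv.1]⟩⟩
  have hA₁e : (A₁.erase y).card = k-1 := by
    rw [Finset.card_erase_of_mem hA₁y, huni _ hA₁F]
  calc (F.filter (fun S => z ∈ S ∧ x ∈ S ∧ y ∉ S)).card
      ≤ ((A₁.erase y).biUnion (fun w => ((A₂ w).erase y).biUnion (fun v =>
          F.filter (fun S => ({z,x,w,v} : Finset (Fin n)) ⊆ S)))).card :=
        Finset.card_le_card hsub
    _ ≤ ∑ w ∈ A₁.erase y, (((A₂ w).erase y).biUnion (fun v =>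
          F.filter (fun S => ({z,x,w,v} : Finset (Fin n)) ⊆ S))).card :=
        Finset.card_biUnion_le
    _ ≤ ∑ w ∈ A₁.erase y, (k-1) * Nat.choose (n-4) (k-4) := by
        apply Finset.sum_le_sum
        intro w hwIdx
        rw [Finset.mem_erase] at hwIdx
        obtain ⟨hwy, hwA₁⟩ := hwIdx
        calc (((A₂ w).erase y).biUnion (fun v =>
              F.filter (fun S => ({z,x,w,v} : Finset (Fin n)) ⊆ S))).card
            ≤ ∑ v ∈ (A₂ w).erase y,
                (F.filter (fun S => ({z,x,w,v} : Finset (Fin n)) ⊆ S)).card :=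
              Finset.card_biUnion_le
          _ ≤ ∑ _v ∈ (A₂ w).erase y, Nat.choose (n-4) (k-4) := by
              apply Finset.sum_le_sum
              intro v hv
              rw [Finset.mem_erase] at hv
              have hvA₂ : v ∈ A₂ w := hv.2
              have hne2 : z ≠ w := fun h => hzA₁ (h ▸ hwA₁)
              have hne3 : z ≠ v := fun h => hzA₂ w hwA₁ (h ▸ hvA₂)
              have hne4 : x ≠ w := fun h => hA₁x (h ▸ hwA₁)
              have hne5 : x ≠ v := fun h => hA₂x w (h ▸ hvA₂)
              have hne6 : w ≠ v := fun h => hA₂w w hwy (h ▸ hvA₂)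
              have hcard : ({z,x,w,v} : Finset (Fin n)).card = 4 := by
                rw [Finset.card_insert_of_notMem (by simp [hzx, hne2, hne3]),
                  Finset.card_insert_of_notMem (by simp [hne4, hne5]),
                  Finset.card_insert_of_notMem (by simp [hne6]),
                  Finset.card_singleton]
              have h := count_sup huni ({z,x,w,v} : Finset (Fin n))
              rwa [hcard] at h
          _ = (k-1) * Nat.choose (n-4) (k-4) := by
              rw [Finset.sum_const, smul_eq_mul,
                Finset.card_erase_of_mem (hA₂y w), huni _ (hA₂F w)]
    _ = (k-1)*((k-1) * Nat.choose (n-4) (k-4)) := by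
        rw [Finset.sum_const, smul_eq_mul, hA₁e]

/-- τ=2, case where the side family G_y has a common element besides y. -/
lemma case2_side (hk : 4 ≤ k) (hn : 4*k^2 ≤ n)
    (huni : ∀ A ∈ F, A.card = k) (hint : ∀ A ∈ F, ∀ B ∈ F, (A ∩ B).Nonempty)
    {x y : Fin n} (hxy : x ≠ y) (hcov : ∀ S ∈ F, x ∈ S ∨ y ∈ S)
    {A₁ : Finset (Fin n)} (hA₁F : A₁ ∈ F) (hA₁y : y ∈ A₁) (hA₁x : x ∉ A₁)
    (hW : ((A₁.erase y).filter (fun w => ∀ A ∈ F, y ∈ A → x ∉ A → w ∈ A)).Nonempty) :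
    ∃ z : Fin n, (F.filter (fun S => z ∈ S)).card + Nat.choose (n-k-2) (k-2)
      ≤ Nat.choose (n-2) (k-2) := by
  classical
  have hkk : 4*(k*k) ≤ n := by nlinarith
  have hk4 : 4*k ≤ k*k := Nat.mul_le_mul_right k hk
  have hkn : 2*k + 8 ≤ n := by nlinarith
  set W := (A₁.erase y).filter (fun w => ∀ A ∈ F, y ∈ A → x ∉ A → w ∈ A) with hWdef
  have hWA₁ : W ⊆ A₁.erase y := Finset.filter_subset _ _
  have hA₁card : A₁.card = k := huni _ hA₁F
  have hA₁e : (A₁.erase y).card = k-1 := by rw [Finset.card_erase_of_mem hA₁y, hA₁card]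
  have hs1 : 1 ≤ W.card := Finset.card_pos.2 hW
  have hsk : W.card ≤ k-1 := hA₁e ▸ Finset.card_le_card hWA₁
  have hWmem : ∀ w ∈ W, ∀ A ∈ F, y ∈ A → x ∉ A → w ∈ A := fun w hw => (Finset.mem_filter.1 hw).2
  have hWx : x ∉ W := fun h => hA₁x (Finset.mem_of_mem_erase (hWA₁ h))
  have hWy : y ∉ W := fun h => (Finset.notMem_erase y A₁) (hWA₁ h)
  -- choice of A₂
  have hA₂ex : ∀ w : Fin n, ∃ A, A ∈ F ∧ y ∈ A ∧ x ∉ A ∧ (w ≠ y → w ∉ W → w ∉ A) := by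
    intro w
    by_cases hgood : w ≠ y ∧ w ∉ W
    · by_cases hw1 : w ∈ A₁.erase y
      · have hnall : ¬ (∀ A ∈ F, y ∈ A → x ∉ A → w ∈ A) := by
          intro hall
          exact hgood.2 (Finset.mem_filter.2 ⟨hw1, hall⟩)
        push_neg at hnall
        obtain ⟨A, hAF, hAy, hAx, hAw⟩ := hnall
        exact ⟨A, hAF, hAy, hAx, fun _ _ => hAw⟩
      · refine ⟨A₁, hA₁F, hA₁y, hA₁x, fun h1 _ h3 => ?_⟩
        exact hw1 (Finset.mem_erase.2 ⟨h1, h3⟩)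
    · push_neg at hgood
      refine ⟨A₁, hA₁F, hA₁y, hA₁x, fun h1 h2 => absurd (hgood h1) h2⟩
  choose A₂ hA₂F hA₂y hA₂x hA₂w using hA₂ex
  -- avoidance
  set Av := insert x (insert y (A₁ ∪ A₁.biUnion A₂)) with hAvdef
  have hAvcard : Av.card < n := by
    have c1 : (A₁.biUnion A₂).card ≤ k*k := by
      calc (A₁.biUnion A₂).card ≤ ∑ w ∈ A₁, (A₂ w).card := Finset.card_biUnion_le
        _ = ∑ _w ∈ A₁, k := Finset.sum_congr rfl (fun w _ => huni _ (hA₂F w))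
        _ = k*k := by rw [Finset.sum_const, smul_eq_mul, hA₁card]
    have c2 : (A₁ ∪ A₁.biUnion A₂).card ≤ k + k*k := by
      have := Finset.card_union_le A₁ (A₁.biUnion A₂)
      omega
    have c3 : Av.card ≤ 2 + (k + k*k) := by
      rw [hAvdef]
      calc (insert x (insert y (A₁ ∪ A₁.biUnion A₂))).card
          ≤ (insert y (A₁ ∪ A₁.biUnion A₂)).card + 1 := Finset.card_insert_le _ _
        _ ≤ ((A₁ ∪ A₁.biUnion A₂).card + 1) + 1 := by
            have := Finset.card_insert_le y (A₁ ∪ A₁.biUnion A₂)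
            omega
        _ ≤ 2 + (k + k*k) := by omega
    omega
  obtain ⟨z, hz⟩ : ∃ z : Fin n, z ∉ Av := by
    by_contra h; push_neg at h
    have hsub : Finset.univ ⊆ Av := fun w _ => h w
    have := Finset.card_le_card hsub
    rw [Finset.card_univ, Fintype.card_fin] at this; omega
  have hzx : z ≠ x := by
    intro h; apply hz; rw [hAvdef, h]; exact Finset.mem_insert_self x _
  have hzy : z ≠ y := by
    intro h; apply hz; rw [hAvdef, h]
    exact Finset.mem_insert_of_mem (Finset.mem_insert_self y _)
  have hzA₁ : z ∉ A₁ := fun h => hz (by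
    rw [hAvdef]
    exact Finset.mem_insert_of_mem (Finset.mem_insert_of_mem (Finset.mem_union_left _ h)))
  have hzA₂ : ∀ w ∈ A₁, z ∉ A₂ w := fun w hw h => hz (by
    rw [hAvdef]
    exact Finset.mem_insert_of_mem (Finset.mem_insert_of_mem
      (Finset.mem_union_right _ (Finset.mem_biUnion.2 ⟨w, hw, h⟩))))
  have hzW : z ∉ W := fun h => hzA₁ (Finset.mem_of_mem_erase (hWA₁ h))
  refine ⟨z, ?_⟩
  -- partition of the degree
  have hsplit : (F.filter (fun S => z ∈ S)).card ≤
      (F.filter (fun S => z ∈ S ∧ x ∈ S ∧ y ∈ S)).card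
      + (F.filter (fun S => z ∈ S ∧ x ∈ S ∧ y ∉ S ∧ (S ∩ W).Nonempty)).card
      + (F.filter (fun S => z ∈ S ∧ x ∈ S ∧ y ∉ S ∧ ¬(S ∩ W).Nonempty)).card
      + (F.filter (fun S => z ∈ S ∧ y ∈ S ∧ x ∉ S)).card := by
    have hsub : F.filter (fun S => z ∈ S) ⊆
        ((F.filter (fun S => z ∈ S ∧ x ∈ S ∧ y ∈ S)
        ∪ F.filter (fun S => z ∈ S ∧ x ∈ S ∧ y ∉ S ∧ (S ∩ W).Nonempty))
        ∪ F.filter (fun S => z ∈ S ∧ x ∈ S ∧ y ∉ S ∧ ¬(S ∩ W).Nonempty))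
        ∪ F.filter (fun S => z ∈ S ∧ y ∈ S ∧ x ∉ S) := by
      intro S hS
      rw [Finset.mem_filter] at hS
      obtain ⟨hSF, hzS⟩ := hS
      simp only [Finset.mem_union, Finset.mem_filter]
      rcases hcov S hSF with hx | hy
      · by_cases hyS : y ∈ S
        · exact Or.inl (Or.inl (Or.inl ⟨hSF, hzS, hx, hyS⟩))
        · by_cases hSW : (S ∩ W).Nonempty
          · exact Or.inl (Or.inl (Or.inr ⟨hSF, hzS, hx, hyS, hSW⟩))
          · exact Or.inl (Or.inr ⟨hSF, hzS, hx, hyS, hSW⟩)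
      · by_cases hxS : x ∈ S
        · exact Or.inl (Or.inl (Or.inl ⟨hSF, hzS, hxS, hy⟩))
        · exact Or.inr ⟨hSF, hzS, hy, hxS⟩
    calc (F.filter (fun S => z ∈ S)).card ≤ _ := Finset.card_le_card hsub
      _ ≤ _ + (F.filter (fun S => z ∈ S ∧ y ∈ S ∧ x ∉ S)).card := Finset.card_union_le _ _
      _ ≤ _ := by
          have h1 := Finset.card_union_le
            (F.filter (fun S => z ∈ S ∧ x ∈ S ∧ y ∈ S)
              ∪ F.filter (fun S => z ∈ S ∧ x ∈ S ∧ y ∉ S ∧ (S ∩ W).Nonempty))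
            (F.filter (fun S => z ∈ S ∧ x ∈ S ∧ y ∉ S ∧ ¬(S ∩ W).Nonempty))
          have h2 := Finset.card_union_le
            (F.filter (fun S => z ∈ S ∧ x ∈ S ∧ y ∈ S))
            (F.filter (fun S => z ∈ S ∧ x ∈ S ∧ y ∉ S ∧ (S ∩ W).Nonempty))
          omega
  -- c1
  have hc1 : (F.filter (fun S => z ∈ S ∧ x ∈ S ∧ y ∈ S)).card ≤ Nat.choose (n-3) (k-3) := by
    have hsub : F.filter (fun S => z ∈ S ∧ x ∈ S ∧ y ∈ S) ⊆
        F.filter (fun S => ({z,x,y} : Finset (Fin n)) ⊆ S) := by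
      intro S hS
      rw [Finset.mem_filter] at hS ⊢
      refine ⟨hS.1, ?_⟩
      intro a ha
      simp only [Finset.mem_insert, Finset.mem_singleton] at ha
      rcases ha with rfl|rfl|rfl
      exacts [hS.2.1, hS.2.2.1, hS.2.2.2]
    have hcard : ({z,x,y} : Finset (Fin n)).card = 3 := by
      rw [Finset.card_insert_of_notMem (by simp [hzx, hzy]),
        Finset.card_insert_of_notMem (by simp [hxy]), Finset.card_singleton]
    calc (F.filter (fun S => z ∈ S ∧ x ∈ S ∧ y ∈ S)).card
        ≤ (F.filter (fun S => ({z,x,y} : Finset (Fin n)) ⊆ S)).card := Finset.card_le_card hsub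
      _ ≤ Nat.choose (n - ({z,x,y} : Finset (Fin n)).card) (k - ({z,x,y} : Finset (Fin n)).card) :=
          count_sup huni _
      _ = Nat.choose (n-3) (k-3) := by rw [hcard]
  -- c2a
  have hc2a := count_hitW huni W hWx hWy hzW hzx hzy hxy
  -- c2b
  have hc2b : (F.filter (fun S => z ∈ S ∧ x ∈ S ∧ y ∉ S ∧ ¬(S ∩ W).Nonempty)).card
      ≤ (k-1-W.card) * ((k-1) * Nat.choose (n-4) (k-4)) := by
    have hsub : F.filter (fun S => z ∈ S ∧ x ∈ S ∧ y ∉ S ∧ ¬(S ∩ W).Nonempty) ⊆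
        ((A₁.erase y) \ W).biUnion (fun w => ((A₂ w).erase y).biUnion (fun v =>
          F.filter (fun S => ({z,x,w,v} : Finset (Fin n)) ⊆ S))) := by
      intro S hS
      rw [Finset.mem_filter] at hS
      obtain ⟨hSF, hzS, hxS, hyS, hSW⟩ := hS
      obtain ⟨w, hw⟩ := hint S hSF A₁ hA₁F
      rw [Finset.mem_inter] at hw
      have hwy : w ≠ y := fun h => hyS (h ▸ hw.1)
      have hwW : w ∉ W := fun h => hSW ⟨w, Finset.mem_inter.2 ⟨hw.1, h⟩⟩
      obtain ⟨v, hv⟩ := hint S hSF (A₂ w) (hA₂F w)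
      rw [Finset.mem_inter] at hv
      have hvy : v ≠ y := fun h => hyS (h ▸ hv.1)
      simp only [Finset.mem_biUnion]
      refine ⟨w, Finset.mem_sdiff.2 ⟨Finset.mem_erase.2 ⟨hwy, hw.2⟩, hwW⟩,
        v, Finset.mem_erase.2 ⟨hvy, hv.2⟩, Finset.mem_filter.2 ⟨hSF, ?_⟩⟩
      intro a ha
      simp only [Finset.mem_insert, Finset.mem_singleton] at ha
      rcases ha with rfl|rfl|rfl|rfl
      exacts [hzS, hxS, hw.1, hv.1]
    have hIdx : ((A₁.erase y) \ W).card = k-1-W.card := by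
      rw [Finset.card_sdiff_of_subset hWA₁, hA₁e]
    calc (F.filter (fun S => z ∈ S ∧ x ∈ S ∧ y ∉ S ∧ ¬(S ∩ W).Nonempty)).card
        ≤ (((A₁.erase y) \ W).biUnion (fun w => ((A₂ w).erase y).biUnion (fun v =>
            F.filter (fun S => ({z,x,w,v} : Finset (Fin n)) ⊆ S)))).card :=
          Finset.card_le_card hsub
      _ ≤ ∑ w ∈ (A₁.erase y) \ W, (((A₂ w).erase y).biUnion (fun v =>
            F.filter (fun S => ({z,x,w,v} : Finset (Fin n)) ⊆ S))).card :=
          Finset.card_biUnion_le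
      _ ≤ ∑ w ∈ (A₁.erase y) \ W, (k-1) * Nat.choose (n-4) (k-4) := by
          apply Finset.sum_le_sum
          intro w hwIdx
          rw [Finset.mem_sdiff, Finset.mem_erase] at hwIdx
          obtain ⟨⟨hwy, hwA₁⟩, hwW⟩ := hwIdx
          calc (((A₂ w).erase y).biUnion (fun v =>
                F.filter (fun S => ({z,x,w,v} : Finset (Fin n)) ⊆ S))).card
              ≤ ∑ v ∈ (A₂ w).erase y,
                  (F.filter (fun S => ({z,x,w,v} : Finset (Fin n)) ⊆ S)).card :=
                Finset.card_biUnion_le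
            _ ≤ ∑ _v ∈ (A₂ w).erase y, Nat.choose (n-4) (k-4) := by
                apply Finset.sum_le_sum
                intro v hv
                rw [Finset.mem_erase] at hv
                have hvA₂ : v ∈ A₂ w := hv.2
                have hne1 : z ≠ x := hzx
                have hne2 : z ≠ w := fun h => hzA₁ (h ▸ hwA₁)
                have hne3 : z ≠ v := fun h => hzA₂ w hwA₁ (h ▸ hvA₂)
                have hne4 : x ≠ w := fun h => hA₁x (h ▸ hwA₁)
                have hne5 : x ≠ v := fun h => hA₂x w (h ▸ hvA₂)
                have hne6 : w ≠ v := fun h => hA₂w w hwy hwW (h ▸ hvA₂)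
                have hcard : ({z,x,w,v} : Finset (Fin n)).card = 4 := by
                  rw [Finset.card_insert_of_notMem (by simp [hne1, hne2, hne3]),
                    Finset.card_insert_of_notMem (by simp [hne4, hne5]),
                    Finset.card_insert_of_notMem (by simp [hne6]),
                    Finset.card_singleton]
                have h := count_sup huni ({z,x,w,v} : Finset (Fin n))
                rwa [hcard] at h
            _ = (k-1) * Nat.choose (n-4) (k-4) := by
                rw [Finset.sum_const, smul_eq_mul,
                  Finset.card_erase_of_mem (hA₂y w), huni _ (hA₂F w)]
      _ = (k-1-W.card) * ((k-1) * Nat.choose (n-4) (k-4)) := by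
          rw [Finset.sum_const, smul_eq_mul, hIdx]
  -- the combined bound for f2b + f3
  have hBC : (F.filter (fun S => z ∈ S ∧ x ∈ S ∧ y ∉ S ∧ ¬(S ∩ W).Nonempty)).card
      + (F.filter (fun S => z ∈ S ∧ y ∈ S ∧ x ∉ S)).card + Nat.choose (n-k-2) (k-2)
      ≤ Nat.choose (n - 3 - W.card) (k-2) := by
    rcases Nat.eq_or_lt_of_le hsk with hske | hslt
    · -- W.card = k-1
      have hf3 : (F.filter (fun S => z ∈ S ∧ y ∈ S ∧ x ∉ S)).card = 0 := by
        rw [Finset.card_eq_zero, Finset.eq_empty_iff_forall_notMem]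
        intro S hS
        rw [Finset.mem_filter] at hS
        obtain ⟨hSF, hzS, hyS, hxS⟩ := hS
        have hWS : W ⊆ S := fun w hw => hWmem w hw S hSF hyS hxS
        have hyWS : insert y W ⊆ S := Finset.insert_subset hyS hWS
        have hcI : (insert y W).card = k := by
          rw [Finset.card_insert_of_notMem hWy]; omega
        have hSI : insert y W = S :=
          Finset.eq_of_subset_of_card_le hyWS (by rw [huni S hSF, hcI])
        have hyA : insert y W ⊆ A₁ :=
          Finset.insert_subset hA₁y (fun w hw => Finset.mem_of_mem_erase (hWA₁ hw))
        have hAI : insert y W = A₁ :=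
          Finset.eq_of_subset_of_card_le hyA (by rw [hA₁card, hcI])
        exact hzA₁ (hAI ▸ (hSI ▸ hzS))
      have hz2b : (k-1-W.card) = 0 := by omega
      have h2b0 : (F.filter (fun S => z ∈ S ∧ x ∈ S ∧ y ∉ S ∧ ¬(S ∩ W).Nonempty)).card = 0 := by
        have := hc2b
        rw [hz2b] at this
        omega
      have hEq : n - 3 - W.card = n-k-2 := by omega
      rw [hEq, hf3, h2b0]
      omega
    · -- W.card ≤ k-2
      have hs2 : W.card ≤ k-2 := by omega
      have hf3 : (F.filter (fun S => z ∈ S ∧ y ∈ S ∧ x ∉ S)).card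
          ≤ Nat.choose (n-W.card-3) (k-W.card-2) := by
        have hzI : z ∉ insert y W := by
          simp only [Finset.mem_insert]
          push_neg
          exact ⟨hzy, hzW⟩
        have hxI : x ∉ insert z (insert y W) := by
          simp only [Finset.mem_insert]
          push_neg
          exact ⟨fun h => hzx h.symm, fun h => hxy h, hWx⟩
        have hsub : F.filter (fun S => z ∈ S ∧ y ∈ S ∧ x ∉ S) ⊆
            F.filter (fun S => insert z (insert y W) ⊆ S ∧ x ∉ S) := by
          intro S hS
          rw [Finset.mem_filter] at hS ⊢
          obtain ⟨hSF, hzS, hyS, hxS⟩ := hS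
          refine ⟨hSF, ?_, hxS⟩
          refine Finset.insert_subset hzS (Finset.insert_subset hyS ?_)
          exact fun w hw => hWmem w hw S hSF hyS hxS
        have hD : (insert z (insert y W)).card = W.card + 2 := by
          rw [Finset.card_insert_of_notMem hzI, Finset.card_insert_of_notMem hWy]
        have h := count_sup_avoid huni (insert z (insert y W)) x hxI
        rw [hD] at h
        have e1 : n - (W.card+2) - 1 = n-W.card-3 := by omega
        have e2 : k - (W.card+2) = k-W.card-2 := by omega
        rw [e1, e2] at h
        exact le_trans (Finset.card_le_card hsub) h
      have harith := arith_side hk hn hs1 hs2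
      have htl := tl (n-k-2) (k-3) (k-1-W.card)
      have e3 : k-3+1 = k-2 := by omega
      have e4 : n-k-2 + (k-1-W.card) = n - 3 - W.card := by omega
      rw [e3, e4] at htl
      have e5 : n - W.card - 3 = n - 3 - W.card := by omega
      have e6 : n - W.card - 3 = n - W.card - 3 := rfl
      -- combine
      have e7 : n - W.card - 3 = n - 3 - W.card := by omega
      rw [e7] at hf3
      have e8 : n - W.card - 3 = n - 3 - W.card := by omega
      -- arith_side uses n - W.card - 3 spelled as n - s - 3
      have harith' : (k-1-W.card) * ((k-1) * Nat.choose (n-4) (k-4))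
          + Nat.choose (n - 3 - W.card) (k-W.card-2) ≤ (k-1-W.card) * Nat.choose (n-k-2) (k-3) := by
        have e9 : n - W.card - 3 = n - 3 - W.card := by omega
        rw [← e9]
        exact harith
      omega
  -- final assembly
  have hpascal : Nat.choose (n-2) (k-2) = Nat.choose (n-3) (k-3) + Nat.choose (n-3) (k-2) := by
    have e1 : n-2 = (n-3)+1 := by omega
    have e2 : k-2 = (k-3)+1 := by omega
    rw [e1, e2, Nat.choose_succ_succ']
  omega


/-- τ=2, both side families have no common extra element. -/
lemma case2_empty (hk : 4 ≤ k) (hn : 4*k^2 ≤ n)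
    (huni : ∀ A ∈ F, A.card = k) (hint : ∀ A ∈ F, ∀ B ∈ F, (A ∩ B).Nonempty)
    {x y : Fin n} (hxy : x ≠ y) (hcov : ∀ S ∈ F, x ∈ S ∨ y ∈ S)
    {A₁ : Finset (Fin n)} (hA₁F : A₁ ∈ F) (hA₁y : y ∈ A₁) (hA₁x : x ∉ A₁)
    {B₁ : Finset (Fin n)} (hB₁F : B₁ ∈ F) (hB₁x : x ∈ B₁) (hB₁y : y ∉ B₁)
    (hWy : ¬ ((A₁.erase y).filter (fun w => ∀ A ∈ F, y ∈ A → x ∉ A → w ∈ A)).Nonempty)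
    (hWx : ¬ ((B₁.erase x).filter (fun w => ∀ A ∈ F, x ∈ A → y ∉ A → w ∈ A)).Nonempty) :
    ∃ z : Fin n, (F.filter (fun S => z ∈ S)).card + Nat.choose (n-k-2) (k-2)
      ≤ Nat.choose (n-2) (k-2) := by
  classical
  have hkk : 4*(k*k) ≤ n := by nlinarith
  have hk4 : 4*k ≤ k*k := Nat.mul_le_mul_right k hk
  have hkn : 2*k + 8 ≤ n := by nlinarith
  -- choice functions
  have hA₂ex : ∀ w : Fin n, ∃ A, A ∈ F ∧ y ∈ A ∧ x ∉ A ∧ (w ≠ y → w ∉ A) := by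
    intro w
    by_cases hwy : w = y
    · exact ⟨A₁, hA₁F, hA₁y, hA₁x, fun h _ => absurd hwy h⟩
    · by_cases hw1 : w ∈ A₁.erase y
      · have hnall : ¬ (∀ A ∈ F, y ∈ A → x ∉ A → w ∈ A) := by
          intro hall
          exact hWy ⟨w, Finset.mem_filter.2 ⟨hw1, hall⟩⟩
        push_neg at hnall
        obtain ⟨A, hAF, hAy, hAx, hAw⟩ := hnall
        exact ⟨A, hAF, hAy, hAx, fun _ => hAw⟩
      · refine ⟨A₁, hA₁F, hA₁y, hA₁x, fun h1 h3 => ?_⟩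
        exact hw1 (Finset.mem_erase.2 ⟨h1, h3⟩)
  have hB₂ex : ∀ w : Fin n, ∃ B, B ∈ F ∧ x ∈ B ∧ y ∉ B ∧ (w ≠ x → w ∉ B) := by
    intro w
    by_cases hwx : w = x
    · exact ⟨B₁, hB₁F, hB₁x, hB₁y, fun h _ => absurd hwx h⟩
    · by_cases hw1 : w ∈ B₁.erase x
      · have hnall : ¬ (∀ A ∈ F, x ∈ A → y ∉ A → w ∈ A) := by
          intro hall
          exact hWx ⟨w, Finset.mem_filter.2 ⟨hw1, hall⟩⟩
        push_neg at hnall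
        obtain ⟨A, hAF, hAx', hAy', hAw⟩ := hnall
        exact ⟨A, hAF, hAx', hAy', fun _ => hAw⟩
      · refine ⟨B₁, hB₁F, hB₁x, hB₁y, fun h1 h3 => ?_⟩
        exact hw1 (Finset.mem_erase.2 ⟨h1, h3⟩)
  choose A₂ hA₂F hA₂y hA₂x hA₂w using hA₂ex
  choose B₂ hB₂F hB₂x hB₂y hB₂w using hB₂ex
  -- avoidance
  set Av := insert x (insert y ((A₁ ∪ A₁.biUnion A₂) ∪ (B₁ ∪ B₁.biUnion B₂))) with hAvdef
  have hAvcard : Av.card < n := by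
    have c1 : (A₁.biUnion A₂).card ≤ k*k := by
      calc (A₁.biUnion A₂).card ≤ ∑ w ∈ A₁, (A₂ w).card := Finset.card_biUnion_le
        _ = ∑ _w ∈ A₁, k := Finset.sum_congr rfl (fun w _ => huni _ (hA₂F w))
        _ = k*k := by rw [Finset.sum_const, smul_eq_mul, huni _ hA₁F]
    have c2 : (B₁.biUnion B₂).card ≤ k*k := by
      calc (B₁.biUnion B₂).card ≤ ∑ w ∈ B₁, (B₂ w).card := Finset.card_biUnion_le
        _ = ∑ _w ∈ B₁, k := Finset.sum_congr rfl (fun w _ => huni _ (hB₂F w))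
        _ = k*k := by rw [Finset.sum_const, smul_eq_mul, huni _ hB₁F]
    have c3 := Finset.card_union_le A₁ (A₁.biUnion A₂)
    have c4 := Finset.card_union_le B₁ (B₁.biUnion B₂)
    have c5 := Finset.card_union_le (A₁ ∪ A₁.biUnion A₂) (B₁ ∪ B₁.biUnion B₂)
    have c6 := Finset.card_insert_le y ((A₁ ∪ A₁.biUnion A₂) ∪ (B₁ ∪ B₁.biUnion B₂))
    have c7 := Finset.card_insert_le x (insert y ((A₁ ∪ A₁.biUnion A₂) ∪ (B₁ ∪ B₁.biUnion B₂)))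
    have hA₁c := huni _ hA₁F
    have hB₁c := huni _ hB₁F
    rw [hAvdef]
    omega
  obtain ⟨z, hz⟩ : ∃ z : Fin n, z ∉ Av := by
    by_contra h; push_neg at h
    have hsub : Finset.univ ⊆ Av := fun w _ => h w
    have := Finset.card_le_card hsub
    rw [Finset.card_univ, Fintype.card_fin] at this; omega
  have hzmem : ∀ a, a ∈ Av → z ≠ a := fun a ha h => hz (h ▸ ha)
  have hzx : z ≠ x := hzmem x (by rw [hAvdef]; exact Finset.mem_insert_self x _)
  have hzy : z ≠ y := hzmem y (by
    rw [hAvdef]; exact Finset.mem_insert_of_mem (Finset.mem_insert_self y _))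
  have hzA₁ : z ∉ A₁ := fun h => hz (by
    rw [hAvdef]
    exact Finset.mem_insert_of_mem (Finset.mem_insert_of_mem
      (Finset.mem_union_left _ (Finset.mem_union_left _ h))))
  have hzB₁ : z ∉ B₁ := fun h => hz (by
    rw [hAvdef]
    exact Finset.mem_insert_of_mem (Finset.mem_insert_of_mem
      (Finset.mem_union_right _ (Finset.mem_union_left _ h))))
  have hzA₂ : ∀ w ∈ A₁, z ∉ A₂ w := fun w hw h => hz (by
    rw [hAvdef]
    exact Finset.mem_insert_of_mem (Finset.mem_insert_of_mem
      (Finset.mem_union_left _ (Finset.mem_union_right _ (Finset.mem_biUnion.2 ⟨w, hw, h⟩)))))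
  have hzB₂ : ∀ w ∈ B₁, z ∉ B₂ w := fun w hw h => hz (by
    rw [hAvdef]
    exact Finset.mem_insert_of_mem (Finset.mem_insert_of_mem
      (Finset.mem_union_right _ (Finset.mem_union_right _ (Finset.mem_biUnion.2 ⟨w, hw, h⟩)))))
  refine ⟨z, ?_⟩
  -- partition
  have hsplit : (F.filter (fun S => z ∈ S)).card ≤
      (F.filter (fun S => z ∈ S ∧ x ∈ S ∧ y ∈ S)).card
      + (F.filter (fun S => z ∈ S ∧ x ∈ S ∧ y ∉ S)).card
      + (F.filter (fun S => z ∈ S ∧ y ∈ S ∧ x ∉ S)).card := by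
    have hsub : F.filter (fun S => z ∈ S) ⊆
        (F.filter (fun S => z ∈ S ∧ x ∈ S ∧ y ∈ S)
        ∪ F.filter (fun S => z ∈ S ∧ x ∈ S ∧ y ∉ S))
        ∪ F.filter (fun S => z ∈ S ∧ y ∈ S ∧ x ∉ S) := by
      intro S hS
      rw [Finset.mem_filter] at hS
      obtain ⟨hSF, hzS⟩ := hS
      simp only [Finset.mem_union, Finset.mem_filter]
      rcases hcov S hSF with hx | hy
      · by_cases hyS : y ∈ S
        · exact Or.inl (Or.inl ⟨hSF, hzS, hx, hyS⟩)
        · exact Or.inl (Or.inr ⟨hSF, hzS, hx, hyS⟩)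
      · by_cases hxS : x ∈ S
        · exact Or.inl (Or.inl ⟨hSF, hzS, hxS, hy⟩)
        · exact Or.inr ⟨hSF, hzS, hy, hxS⟩
    calc (F.filter (fun S => z ∈ S)).card ≤ _ := Finset.card_le_card hsub
      _ ≤ _ := Finset.card_union_le _ _
      _ ≤ _ := by
          have := Finset.card_union_le
            (F.filter (fun S => z ∈ S ∧ x ∈ S ∧ y ∈ S))
            (F.filter (fun S => z ∈ S ∧ x ∈ S ∧ y ∉ S))
          omega
  have hc1 : (F.filter (fun S => z ∈ S ∧ x ∈ S ∧ y ∈ S)).card ≤ Nat.choose (n-3) (k-3) := by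
    have hsub : F.filter (fun S => z ∈ S ∧ x ∈ S ∧ y ∈ S) ⊆
        F.filter (fun S => ({z,x,y} : Finset (Fin n)) ⊆ S) := by
      intro S hS
      rw [Finset.mem_filter] at hS ⊢
      refine ⟨hS.1, ?_⟩
      intro a ha
      simp only [Finset.mem_insert, Finset.mem_singleton] at ha
      rcases ha with rfl|rfl|rfl
      exacts [hS.2.1, hS.2.2.1, hS.2.2.2]
    have hcard : ({z,x,y} : Finset (Fin n)).card = 3 := by
      rw [Finset.card_insert_of_notMem (by simp [hzx, hzy]),
        Finset.card_insert_of_notMem (by simp [hxy]), Finset.card_singleton]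
    calc (F.filter (fun S => z ∈ S ∧ x ∈ S ∧ y ∈ S)).card
        ≤ (F.filter (fun S => ({z,x,y} : Finset (Fin n)) ⊆ S)).card := Finset.card_le_card hsub
      _ ≤ Nat.choose (n - ({z,x,y} : Finset (Fin n)).card) (k - ({z,x,y} : Finset (Fin n)).card) :=
          count_sup huni _
      _ = Nat.choose (n-3) (k-3) := by rw [hcard]
  have hc2 := branch_empty huni hint hA₁F hA₁y hA₁x hA₂F hA₂y hA₂x hA₂w hzx hzA₁ hzA₂
  have hc3 := branch_empty huni hint hB₁F hB₁x hB₁y hB₂F hB₂x hB₂y hB₂w hzy hzB₁ hzB₂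
  -- arithmetic : 2*(k-1)*((k-1)*E) ≤ (k-1)*Q
  have hQ : 2*(k-1) * Nat.choose (n-4) (k-4) ≤ 1 * Nat.choose (n-k-2) (k-3) := by
    apply master _ _ hk hn
    calc 2*(k-1) * ((k-3)*(n-4)) ≤ (3*k) * ((k-3)*(n-4)) :=
          Nat.mul_le_mul_right _ (by omega)
      _ ≤ 1 * ((n-2*k+2)*(n-4-(k-2)*(k-4))) := by rw [one_mul]; exact polycore hk hn
  have harith : (k-1)*((k-1) * Nat.choose (n-4) (k-4)) + (k-1)*((k-1) * Nat.choose (n-4) (k-4))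
      ≤ (k-1) * Nat.choose (n-k-2) (k-3) := by
    have h1 : (k-1)*((k-1) * Nat.choose (n-4) (k-4)) + (k-1)*((k-1) * Nat.choose (n-4) (k-4))
        = (k-1) * ((2*(k-1)) * Nat.choose (n-4) (k-4)) := by ring
    rw [h1]
    calc (k-1) * ((2*(k-1)) * Nat.choose (n-4) (k-4))
        ≤ (k-1) * (1 * Nat.choose (n-k-2) (k-3)) := Nat.mul_le_mul_left _ hQ
      _ = (k-1) * Nat.choose (n-k-2) (k-3) := by rw [one_mul]
  have htl := tl (n-k-2) (k-3) (k-1)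
  have e3 : k-3+1 = k-2 := by omega
  have e4 : n-k-2 + (k-1) = n-3 := by omega
  rw [e3, e4] at htl
  have hpascal : Nat.choose (n-2) (k-2) = Nat.choose (n-3) (k-3) + Nat.choose (n-3) (k-2) := by
    have e1 : n-2 = (n-3)+1 := by omega
    have e2 : k-2 = (k-3)+1 := by omega
    rw [e1, e2, Nat.choose_succ_succ']
  omega

/-- τ = 2 case -/
lemma case2 (hk : 4 ≤ k) (hn : 4*k^2 ≤ n)
    (huni : ∀ A ∈ F, A.card = k) (hint : ∀ A ∈ F, ∀ B ∈ F, (A ∩ B).Nonempty)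
    {x y : Fin n} (hxy : x ≠ y) (hcov : ∀ S ∈ F, x ∈ S ∨ y ∈ S)
    (hA : ∃ A ∈ F, y ∈ A ∧ x ∉ A) (hB : ∃ B ∈ F, x ∈ B ∧ y ∉ B) :
    ∃ z : Fin n, (F.filter (fun S => z ∈ S)).card + Nat.choose (n-k-2) (k-2)
      ≤ Nat.choose (n-2) (k-2) := by
  classical
  obtain ⟨A₁, hA₁F, hA₁y, hA₁x⟩ := hA
  obtain ⟨B₁, hB₁F, hB₁x, hB₁y⟩ := hB
  by_cases hWy : ((A₁.erase y).filter (fun w => ∀ A ∈ F, y ∈ A → x ∉ A → w ∈ A)).Nonempty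
  · exact case2_side hk hn huni hint hxy hcov hA₁F hA₁y hA₁x hWy
  · by_cases hWx : ((B₁.erase x).filter (fun w => ∀ A ∈ F, x ∈ A → y ∉ A → w ∈ A)).Nonempty
    · exact case2_side hk hn huni hint hxy.symm (fun S hS => (hcov S hS).symm)
        hB₁F hB₁x hB₁y hWx
    · exact case2_empty hk hn huni hint hxy hcov hA₁F hA₁y hA₁x hB₁F hB₁x hB₁y hWy hWx


end DHM

open DHM in
/-- Degree version of the Hilton--Milner theorem (Theorem 1.1):
if `k ≥ 4`, `n ≥ 30k²` for `k ∈ {4,5}` and `n ≥ 4k²` for `k ≥ 6`, and `F` is a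
non-trivial intersecting family of `k`-subsets of `[n]`, then
`δ(F) ≤ C(n-2, k-2) - C(n-k-2, k-2)`. -/
theorem degree_hilton_milner (n k : ℕ) (hk : 4 ≤ k)
    (hn45 : k ≤ 5 → 30 * k ^ 2 ≤ n) (hn6 : 6 ≤ k → 4 * k ^ 2 ≤ n)
    (F : Finset (Finset (Fin n)))
    (huniform : ∀ A ∈ F, A.card = k)
    (hintersecting : ∀ A ∈ F, ∀ B ∈ F, (A ∩ B).Nonempty)
    (hnontrivial : ¬ ∃ x : Fin n, ∀ A ∈ F, x ∈ A) :
    ∃ x : Fin n, (F.filter (fun A => x ∈ A)).card ≤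
      Nat.choose (n - 2) (k - 2) - Nat.choose (n - k - 2) (k - 2) := by
  classical
  have hn : 4*k^2 ≤ n := by
    rcases le_or_gt k 5 with h | h
    · have := hn45 h; nlinarith
    · exact hn6 (by omega)
  have hn0 : 0 < n := by nlinarith
  push_neg at hnontrivial
  obtain ⟨A₀, hA₀F, _⟩ := hnontrivial ⟨0, hn0⟩
  have hcovex : ∃ m : ℕ, ∃ U : Finset (Fin n), U.card = m ∧ ∀ S ∈ F, (S ∩ U).Nonempty :=
    ⟨k, A₀, huniform _ hA₀F, fun S hS => hintersecting S hS A₀ hA₀F⟩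
  obtain ⟨U, hUcard, hUcov⟩ := Nat.find_spec hcovex
  have htk : Nat.find hcovex ≤ k :=
    Nat.find_le ⟨A₀, huniform _ hA₀F, fun S hS => hintersecting S hS A₀ hA₀F⟩
  have hno : ∀ V : Finset (Fin n), V.card < Nat.find hcovex → ∃ S ∈ F, S ∩ V = ∅ := by
    intro V hV
    by_contra h; push_neg at h
    have hw : ∃ U : Finset (Fin n), U.card = V.card ∧ ∀ S ∈ F, (S ∩ U).Nonempty :=
      ⟨V, rfl, fun S hS => h S hS⟩
    have h2 : Nat.find hcovex ≤ V.card := Nat.find_le hw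
    omega
  suffices hsuff : ∃ z : Fin n, (F.filter (fun S => z ∈ S)).card
      + Nat.choose (n-k-2) (k-2) ≤ Nat.choose (n-2) (k-2) by
    obtain ⟨z, hz⟩ := hsuff
    exact ⟨z, Nat.le_sub_of_add_le hz⟩
  set t := Nat.find hcovex with htdef
  by_cases ht4 : 4 ≤ t
  · exact case4 hk hn huniform hintersecting ht4 htk U hUcard hUcov hno
  · -- t ≤ 3
    interval_cases t
    · -- t = 0 : empty cover, but F nonempty
      have hU0 : U = ∅ := Finset.card_eq_zero.1 hUcard
      have := hUcov A₀ hA₀F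
      rw [hU0] at this
      simp at this
    · -- t = 1 : trivial family, contradiction
      obtain ⟨x, hx⟩ := Finset.card_eq_one.1 hUcard
      exfalso
      obtain ⟨A, hAF, hAx⟩ := hnontrivial x
      obtain ⟨a, ha⟩ := hUcov A hAF
      rw [hx, Finset.mem_inter, Finset.mem_singleton] at ha
      exact hAx (ha.2 ▸ ha.1)
    · -- t = 2
      obtain ⟨x, y, hxy, hUxy⟩ := Finset.card_eq_two.1 hUcard
      have hcov : ∀ S ∈ F, x ∈ S ∨ y ∈ S := by
        intro S hS
        obtain ⟨a, ha⟩ := hUcov S hS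
        rw [hUxy, Finset.mem_inter, Finset.mem_insert, Finset.mem_singleton] at ha
        rcases ha.2 with h | h
        · exact Or.inl (h ▸ ha.1)
        · exact Or.inr (h ▸ ha.1)
      have hA : ∃ A ∈ F, y ∈ A ∧ x ∉ A := by
        obtain ⟨A, hAF, hAx⟩ := hnontrivial x
        rcases hcov A hAF with h | h
        · exact absurd h hAx
        · exact ⟨A, hAF, h, hAx⟩
      have hB : ∃ B ∈ F, x ∈ B ∧ y ∉ B := by
        obtain ⟨B, hBF, hBy⟩ := hnontrivial y
        rcases hcov B hBF with h | h
        · exact ⟨B, hBF, h, hBy⟩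
        · exact absurd h hBy
      exact case2 hk hn huniform hintersecting hxy hcov hA hB
    · -- t = 3
      exact case3 hk hn huniform hintersecting U hUcard hUcov hno
end

section
/- If n ≥ 7 and F is a non-trivial intersecting family of 3-element subsets of [n], then δ(F) ≤ 3. -/
variable {α : Type*} [DecidableEq α]

lemma eq_triple {E : Finset α} {x y w : α} (hE : E.card = 3) (hx : x ∈ E) (hy : y ∈ E)
    (hw : w ∈ E) (hxy : x ≠ y) (hxw : x ≠ w) (hyw : y ≠ w) : E = {x, y, w} := by
  have hsub : ({x, y, w} : Finset α) ⊆ E := by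
    intro v hv
    simp only [Finset.mem_insert, Finset.mem_singleton] at hv
    rcases hv with rfl | rfl | rfl <;> assumption
  have hcard : ({x, y, w} : Finset α).card = 3 :=
    Finset.card_eq_three.mpr ⟨x, y, w, hxy, hxw, hyw, rfl⟩
  exact (Finset.eq_of_subset_of_card_le hsub (by omega)).symm

lemma eq_pair {E : Finset α} {x y : α} (hE : E.card = 2) (hx : x ∈ E) (hy : y ∈ E)
    (hxy : x ≠ y) : E = {x, y} := by
  have hsub : ({x, y} : Finset α) ⊆ E := by
    intro v hv
    simp only [Finset.mem_insert, Finset.mem_singleton] at hv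
    rcases hv with rfl | rfl <;> assumption
  have hcard : ({x, y} : Finset α).card = 2 := Finset.card_pair hxy
  exact (Finset.eq_of_subset_of_card_le hsub (by omega)).symm

-- pairwise intersecting family of ≥4 pairs has a common element
lemma star_of_pairwise (L : Finset (Finset α)) (hpair : ∀ P ∈ L, P.card = 2)
    (hint : ∀ P ∈ L, ∀ Q ∈ L, (P ∩ Q).Nonempty) (hL : 4 ≤ L.card) :
    ∃ v, ∀ P ∈ L, v ∈ P := by
  by_contra hstar
  push_neg at hstar
  -- get P1
  have hne : L.Nonempty := Finset.card_pos.mp (by omega)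
  obtain ⟨P1, hP1⟩ := hne
  obtain ⟨x, y, hxy, rfl⟩ := Finset.card_eq_two.mp (hpair _ hP1)
  obtain ⟨P2, hP2, hxP2⟩ := hstar x
  have hyP2 : y ∈ P2 := by
    obtain ⟨w, hw⟩ := hint _ hP1 _ hP2
    simp only [Finset.mem_inter, Finset.mem_insert, Finset.mem_singleton] at hw
    rcases hw with ⟨rfl | rfl, h2⟩
    · exact absurd h2 hxP2
    · exact h2
  obtain ⟨u, hu⟩ : ∃ u, P2 = {y, u} ∧ u ≠ x ∧ u ≠ y := by
    obtain ⟨s, t, hst, rfl⟩ := Finset.card_eq_two.mp (hpair _ hP2)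
    simp only [Finset.mem_insert, Finset.mem_singleton] at hyP2 hxP2
    push_neg at hxP2
    rcases hyP2 with rfl | rfl
    · exact ⟨t, rfl, Ne.symm hxP2.2, Ne.symm hst⟩
    · exact ⟨s, Finset.pair_comm _ _, Ne.symm hxP2.1, hst⟩
  obtain ⟨hP2eq, hux, huy⟩ := hu
  obtain ⟨P3, hP3, hyP3⟩ := hstar y
  have hxP3 : x ∈ P3 := by
    obtain ⟨w, hw⟩ := hint _ hP1 _ hP3
    simp only [Finset.mem_inter, Finset.mem_insert, Finset.mem_singleton] at hw
    rcases hw with ⟨rfl | rfl, h2⟩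
    · exact h2
    · exact absurd h2 hyP3
  have huP3 : u ∈ P3 := by
    obtain ⟨w, hw⟩ := hint _ hP2 _ hP3
    rw [hP2eq] at hw
    simp only [Finset.mem_inter, Finset.mem_insert, Finset.mem_singleton] at hw
    rcases hw with ⟨rfl | rfl, h2⟩
    · exact absurd h2 hyP3
    · exact h2
  have hP3eq : P3 = {x, u} := eq_pair (hpair _ hP3) hxP3 huP3 (fun h => hux h.symm)
  -- every member of L is one of the three pairs
  have hsub : L ⊆ {({x, y} : Finset α), {y, u}, {x, u}} := by
    intro P hP
    have h1 := hint _ hP _ hP1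
    have h2 := hint _ hP _ hP2
    have h3 := hint _ hP _ hP3
    rw [hP2eq] at h2; rw [hP3eq] at h3
    have hx' : x ∈ P ∨ y ∈ P := by
      obtain ⟨w, hw⟩ := h1
      simp only [Finset.mem_inter, Finset.mem_insert, Finset.mem_singleton] at hw
      rcases hw with ⟨h, rfl | rfl⟩
      · exact Or.inl h
      · exact Or.inr h
    have hy' : y ∈ P ∨ u ∈ P := by
      obtain ⟨w, hw⟩ := h2
      simp only [Finset.mem_inter, Finset.mem_insert, Finset.mem_singleton] at hw
      rcases hw with ⟨h, rfl | rfl⟩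
      · exact Or.inl h
      · exact Or.inr h
    have hu' : x ∈ P ∨ u ∈ P := by
      obtain ⟨w, hw⟩ := h3
      simp only [Finset.mem_inter, Finset.mem_insert, Finset.mem_singleton] at hw
      rcases hw with ⟨h, rfl | rfl⟩
      · exact Or.inl h
      · exact Or.inr h
    simp only [Finset.mem_insert, Finset.mem_singleton]
    rcases hx' with hxP | hyP
    · rcases hy' with hyP | huP
      · exact Or.inl (eq_pair (hpair _ hP) hxP hyP hxy)
      · exact Or.inr (Or.inr (eq_pair (hpair _ hP) hxP huP (fun h => hux h.symm)))
    · rcases hu' with hxP | huP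
      · exact Or.inl (eq_pair (hpair _ hP) hxP hyP hxy)
      · exact Or.inr (Or.inl (eq_pair (hpair _ hP) hyP huP (fun h => huy h.symm)))
  have : L.card ≤ 3 := le_trans (Finset.card_le_card hsub) (by
    apply le_trans (Finset.card_insert_le _ _)
    have := Finset.card_insert_le ({y, u} : Finset α) ({({x,u} : Finset α)} : Finset (Finset α))
    simp only [Finset.card_singleton] at this ⊢
    omega)
  omega

-- pairwise intersecting pairs, all meeting A,B,C with empty triple intersection: at most 3
lemma K1 (L : Finset (Finset α)) (A B C : Finset α)
    (hpair : ∀ P ∈ L, P.card = 2)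
    (hmeet : ∀ P ∈ L, (P ∩ A).Nonempty ∧ (P ∩ B).Nonempty ∧ (P ∩ C).Nonempty)
    (hABC : A ∩ B ∩ C = ∅)
    (hint : ∀ P ∈ L, ∀ Q ∈ L, (P ∩ Q).Nonempty)
    (hA : A.card = 3) (hB : B.card = 3) (hC : C.card = 3) : L.card ≤ 3 := by
  by_contra hL
  push_neg at hL
  obtain ⟨v, hv⟩ := star_of_pairwise L hpair hint (by omega)
  -- v missing from one of A, B, C
  have hvT : ∃ T : Finset α, T.card = 3 ∧ v ∉ T ∧ ∀ P ∈ L, (P ∩ T).Nonempty := by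
    by_cases hvA : v ∈ A
    · by_cases hvB : v ∈ B
      · refine ⟨C, hC, ?_, fun P hP => (hmeet P hP).2.2⟩
        intro hvC
        have : v ∈ A ∩ B ∩ C := by simp [hvA, hvB, hvC]
        simp [hABC] at this
      · exact ⟨B, hB, hvB, fun P hP => (hmeet P hP).2.1⟩
    · exact ⟨A, hA, hvA, fun P hP => (hmeet P hP).1⟩
  obtain ⟨T, hTcard, hvT', hmeetT⟩ := hvT
  have hsub : L ⊆ T.image (fun w => ({v, w} : Finset α)) := by
    intro P hP
    obtain ⟨w, hw⟩ := hmeetT P hP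
    simp only [Finset.mem_inter] at hw
    have hwv : w ≠ v := fun h => hvT' (h ▸ hw.2)
    have : P = {v, w} := eq_pair (hpair _ hP) (hv _ hP) hw.1 (Ne.symm hwv)
    simp only [Finset.mem_image]
    exact ⟨w, hw.2, this.symm⟩
  have := Finset.card_le_card hsub
  have := Finset.card_image_le (s := T) (f := fun w => ({v, w} : Finset α))
  omega

-- cross-intersecting kill
lemma cross_kill (L1 L2 : Finset (Finset α)) (A B C : Finset α)
    (hpair1 : ∀ P ∈ L1, P.card = 2) (hpair2 : ∀ P ∈ L2, P.card = 2)
    (hmeet : ∀ P ∈ L1, (P ∩ A).Nonempty ∧ (P ∩ B).Nonempty ∧ (P ∩ C).Nonempty)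
    (hABC : A ∩ B ∩ C = ∅)
    (hcross : ∀ P ∈ L1, ∀ Q ∈ L2, (P ∩ Q).Nonempty)
    (hL1 : 4 ≤ L1.card) (hL2 : 4 ≤ L2.card)
    (hA : A.card = 3) (hB : B.card = 3) (hC : C.card = 3) : False := by
  by_cases hpw : ∀ P ∈ L1, ∀ Q ∈ L1, (P ∩ Q).Nonempty
  · have := K1 L1 A B C hpair1 hmeet hABC hpw hA hB hC
    omega
  · push_neg at hpw
    obtain ⟨P, hP, Q, hQ, hPQ⟩ := hpw
    obtain ⟨p1, p2, hp, rfl⟩ := Finset.card_eq_two.mp (hpair1 _ hP)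
    obtain ⟨q1, q2, hq, rfl⟩ := Finset.card_eq_two.mp (hpair1 _ hQ)
    have hdisj : ∀ s ∈ ({p1, p2} : Finset α), ∀ t ∈ ({q1, q2} : Finset α), s ≠ t := by
      intro s hs t ht hst
      subst hst
      have : s ∈ ({p1,p2} : Finset α) ∩ {q1,q2} := Finset.mem_inter.mpr ⟨hs, ht⟩
      simp [hPQ] at this
    have hp1q1 : p1 ≠ q1 := hdisj p1 (by simp) q1 (by simp)
    have hp1q2 : p1 ≠ q2 := hdisj p1 (by simp) q2 (by simp)
    have hp2q1 : p2 ≠ q1 := hdisj p2 (by simp) q1 (by simp)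
    have hp2q2 : p2 ≠ q2 := hdisj p2 (by simp) q2 (by simp)
    -- L2 is contained in the 4 transversals
    have hsub2 : L2 ⊆ {({p1,q1} : Finset α), {p1,q2}, {p2,q1}, {p2,q2}} := by
      intro R hR
      obtain ⟨wP, hwP⟩ := hcross _ hP _ hR
      obtain ⟨wQ, hwQ⟩ := hcross _ hQ _ hR
      simp only [Finset.mem_inter, Finset.mem_insert, Finset.mem_singleton] at hwP hwQ
      have hne : wP ≠ wQ := by
        intro h; subst h
        rcases hwP.1 with rfl | rfl <;> rcases hwQ.1 with rfl | rfl <;> simp_all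
      have hReq : R = {wP, wQ} := eq_pair (hpair2 _ hR) hwP.2 hwQ.2 hne
      simp only [Finset.mem_insert, Finset.mem_singleton]
      rcases hwP.1 with rfl | rfl <;> rcases hwQ.1 with rfl | rfl <;> simp [hReq]
    have hcard4 : ({({p1,q1} : Finset α), {p1,q2}, {p2,q1}, {p2,q2}} : Finset (Finset α)).card ≤ 4 := by
      apply le_trans (Finset.card_insert_le _ _)
      have h1 := Finset.card_insert_le ({p1,q2} : Finset α) ({({p2,q1} : Finset α), {p2,q2}} : Finset (Finset α))
      have h2 := Finset.card_insert_le ({p2,q1} : Finset α) ({({p2,q2} : Finset α)} : Finset (Finset α))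
      simp only [Finset.card_singleton] at h1 h2 ⊢
      omega
    have hL2eq' : ({({p1,q1} : Finset α), {p1,q2}, {p2,q1}, {p2,q2}} : Finset (Finset α)) = L2 :=
      (Finset.eq_of_subset_of_card_le hsub2 (by omega)).symm
    have hm1 : ({p1,q1} : Finset α) ∈ L2 := hL2eq' ▸ (by simp)
    have hm2 : ({p1,q2} : Finset α) ∈ L2 := hL2eq' ▸ (by simp)
    have hm3 : ({p2,q1} : Finset α) ∈ L2 := hL2eq' ▸ (by simp)
    have hm4 : ({p2,q2} : Finset α) ∈ L2 := hL2eq' ▸ (by simp)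
    -- now L1 ⊆ {{p1,p2},{q1,q2}}
    have hsub1 : L1 ⊆ {({p1,p2} : Finset α), {q1,q2}} := by
      intro S hS
      obtain ⟨w1, hw1⟩ := hcross _ hS _ hm1
      obtain ⟨w4, hw4⟩ := hcross _ hS _ hm4
      simp only [Finset.mem_inter, Finset.mem_insert, Finset.mem_singleton] at hw1 hw4
      have hne : w1 ≠ w4 := by
        intro h; subst h
        rcases hw1.2 with rfl | rfl <;> rcases hw4.2 with rfl | rfl <;> simp_all
      have hSeq : S = {w1, w4} := eq_pair (hpair1 _ hS) hw1.1 hw4.1 hne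
      simp only [Finset.mem_insert, Finset.mem_singleton]
      rcases hw1.2 with rfl | rfl <;> rcases hw4.2 with rfl | rfl
      · -- S = {p1, p2}
        exact Or.inl hSeq
      · -- S = {p1, q2} : contradicts meeting {p2,q1}
        exfalso
        obtain ⟨w, hw⟩ := hcross _ hS _ hm3
        rw [hSeq] at hw
        simp only [Finset.mem_inter, Finset.mem_insert, Finset.mem_singleton] at hw
        rcases hw with ⟨rfl | rfl, rfl | rfl⟩ <;> simp_all
      · -- S = {q1, p2}
        exfalso
        obtain ⟨w, hw⟩ := hcross _ hS _ hm2
        rw [hSeq] at hw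
        simp only [Finset.mem_inter, Finset.mem_insert, Finset.mem_singleton] at hw
        rcases hw with ⟨rfl | rfl, rfl | rfl⟩ <;> simp_all
      · -- S = {q1, q2}
        exact Or.inr hSeq
    have : L1.card ≤ 2 := le_trans (Finset.card_le_card hsub1) (by
      apply le_trans (Finset.card_insert_le _ _)
      simp)
    omega

lemma two_outside (F : Finset (Finset α))
    (huniform : ∀ A ∈ F, A.card = 3)
    (hintersecting : ∀ A ∈ F, ∀ B ∈ F, (A ∩ B).Nonempty)
    (A B C : Finset α) (hAF : A ∈ F) (hBF : B ∈ F) (hCF : C ∈ F)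
    (hABC : A ∩ B ∩ C = ∅)
    (y1 y2 : α) (hy12 : y1 ≠ y2)
    (hy1 : y1 ∉ A ∪ B ∪ C) (hy2 : y2 ∉ A ∪ B ∪ C)
    (hd1 : 4 ≤ (F.filter (fun E => y1 ∈ E)).card)
    (hd2 : 4 ≤ (F.filter (fun E => y2 ∈ E)).card) : False := by
  simp only [Finset.mem_union, not_or] at hy1 hy2
  have key : ∀ y : α, y ∉ A → y ∉ B → y ∉ C →
      ∀ E ∈ F, y ∈ E →
        (E.erase y).card = 2 ∧ ((E.erase y) ∩ A).Nonempty ∧ ((E.erase y) ∩ B).Nonempty ∧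
        ((E.erase y) ∩ C).Nonempty ∧ (E.erase y) ⊆ A ∪ B ∪ C := by
    intro y hyA hyB hyC E hE hyE
    have hcard : (E.erase y).card = 2 := by
      rw [Finset.card_erase_of_mem hyE, huniform _ hE]
    have meet : ∀ T : Finset α, T ∈ F → y ∉ T → ((E.erase y) ∩ T).Nonempty := by
      intro T hT hyT
      obtain ⟨w, hw⟩ := hintersecting _ hE _ hT
      simp only [Finset.mem_inter] at hw
      have : w ≠ y := fun h => hyT (h ▸ hw.2)
      exact ⟨w, Finset.mem_inter.mpr ⟨Finset.mem_erase.mpr ⟨this, hw.1⟩, hw.2⟩⟩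
    refine ⟨hcard, meet A hAF hyA, meet B hBF hyB, meet C hCF hyC, ?_⟩
    -- the pair lies inside A ∪ B ∪ C
    obtain ⟨u, v, huv, hP⟩ := Finset.card_eq_two.mp hcard
    have single : ∀ s t : α, (E.erase y) = {s, t} →
        s ∉ A ∪ B ∪ C → False := by
      intro s t hst hsU
      simp only [Finset.mem_union, not_or] at hsU
      have hin : ∀ T : Finset α, T ∈ F → y ∉ T → s ∉ T → t ∈ T := by
        intro T hT hyT hsT
        obtain ⟨w, hw⟩ := meet T hT hyT
        rw [hst] at hw
        simp only [Finset.mem_inter, Finset.mem_insert, Finset.mem_singleton] at hw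
        rcases hw with ⟨rfl | rfl, h2⟩
        · exact absurd h2 hsT
        · exact h2
      have htA := hin A hAF hyA hsU.1.1
      have htB := hin B hBF hyB hsU.1.2
      have htC := hin C hCF hyC hsU.2
      have : t ∈ A ∩ B ∩ C := by simp [htA, htB, htC]
      simp [hABC] at this
    rw [hP]
    intro w hw
    simp only [Finset.mem_insert, Finset.mem_singleton] at hw
    by_contra hwU
    rcases hw with rfl | rfl
    · exact single w v hP hwU
    · exact single w u (hP.trans (Finset.pair_comm u w)) hwU
  -- links
  set L1 := (F.filter (fun E => y1 ∈ E)).image (fun E => E.erase y1) with hL1def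
  set L2 := (F.filter (fun E => y2 ∈ E)).image (fun E => E.erase y2) with hL2def
  have hinj : ∀ y : α, Set.InjOn (fun E : Finset α => E.erase y)
      (F.filter (fun E => y ∈ E) : Finset (Finset α)) := by
    intro y E1 h1 E2 h2 h
    simp only [Finset.coe_filter, Set.mem_setOf_eq] at h1 h2
    have := congrArg (insert y) h
    rwa [Finset.insert_erase h1.2, Finset.insert_erase h2.2] at this
  have hcard1 : 4 ≤ L1.card := by
    rw [hL1def, Finset.card_image_of_injOn (hinj y1)]; exact hd1
  have hcard2 : 4 ≤ L2.card := by
    rw [hL2def, Finset.card_image_of_injOn (hinj y2)]; exact hd2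
  have hmem1 : ∀ P ∈ L1, ∃ E ∈ F, y1 ∈ E ∧ P = E.erase y1 := by
    intro P hP
    rw [hL1def] at hP
    simp only [Finset.mem_image, Finset.mem_filter] at hP
    obtain ⟨E, ⟨hE, hy⟩, rfl⟩ := hP
    exact ⟨E, hE, hy, rfl⟩
  have hmem2 : ∀ P ∈ L2, ∃ E ∈ F, y2 ∈ E ∧ P = E.erase y2 := by
    intro P hP
    rw [hL2def] at hP
    simp only [Finset.mem_image, Finset.mem_filter] at hP
    obtain ⟨E, ⟨hE, hy⟩, rfl⟩ := hP
    exact ⟨E, hE, hy, rfl⟩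
  apply cross_kill L1 L2 A B C ?_ ?_ ?_ hABC ?_ hcard1 hcard2
    (huniform _ hAF) (huniform _ hBF) (huniform _ hCF)
  · intro P hP
    obtain ⟨E, hE, hy, rfl⟩ := hmem1 P hP
    exact (key y1 hy1.1.1 hy1.1.2 hy1.2 E hE hy).1
  · intro P hP
    obtain ⟨E, hE, hy, rfl⟩ := hmem2 P hP
    exact (key y2 hy2.1.1 hy2.1.2 hy2.2 E hE hy).1
  · intro P hP
    obtain ⟨E, hE, hy, rfl⟩ := hmem1 P hP
    obtain ⟨_, h1, h2, h3, _⟩ := key y1 hy1.1.1 hy1.1.2 hy1.2 E hE hy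
    exact ⟨h1, h2, h3⟩
  · -- cross intersecting
    intro P hP Q hQ
    obtain ⟨E1, hE1, hy1', rfl⟩ := hmem1 P hP
    obtain ⟨E2, hE2, hy2', rfl⟩ := hmem2 Q hQ
    have hPU := (key y1 hy1.1.1 hy1.1.2 hy1.2 E1 hE1 hy1').2.2.2.2
    have hQU := (key y2 hy2.1.1 hy2.1.2 hy2.2 E2 hE2 hy2').2.2.2.2
    obtain ⟨w, hw⟩ := hintersecting _ hE1 _ hE2
    simp only [Finset.mem_inter] at hw
    have hwy1 : w ≠ y1 := by
      rintro rfl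
      have : w ∈ E2.erase y2 := Finset.mem_erase.mpr ⟨hy12, hw.2⟩
      have := hQU this
      simp only [Finset.mem_union] at this
      rcases this with h | h
      · rcases h with h | h
        · exact hy1.1.1 h
        · exact hy1.1.2 h
      · exact hy1.2 h
    have hwy2 : w ≠ y2 := by
      rintro rfl
      have : w ∈ E1.erase y1 := Finset.mem_erase.mpr ⟨Ne.symm hy12, hw.1⟩
      have := hPU this
      simp only [Finset.mem_union] at this
      rcases this with h | h
      · rcases h with h | h
        · exact hy2.1.1 h
        · exact hy2.1.2 h
      · exact hy2.2 h
    exact ⟨w, Finset.mem_inter.mpr ⟨Finset.mem_erase.mpr ⟨hwy1, hw.1⟩,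
      Finset.mem_erase.mpr ⟨hwy2, hw.2⟩⟩⟩

lemma card_le_three {β : Type*} [DecidableEq β] (X Y Z : β) :
    ({X, Y, Z} : Finset β).card ≤ 3 := by
  apply le_trans (Finset.card_insert_le _ _)
  have := Finset.card_insert_le Y ({Z} : Finset β)
  simp only [Finset.card_singleton] at this ⊢
  omega

lemma card_le_four {β : Type*} [DecidableEq β] (W X Y Z : β) :
    ({W, X, Y, Z} : Finset β).card ≤ 4 := by
  apply le_trans (Finset.card_insert_le _ _)
  have := card_le_three X Y Z
  omega

/-- Proposition 1.2: if `n ≥ 7` and `F` is a non-trivial intersecting family of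
`3`-subsets of `[n]`, then `δ(F) ≤ 3`. -/
theorem degree_hilton_milner_k3 (n : ℕ) (hn : 7 ≤ n)
    (F : Finset (Finset (Fin n)))
    (huniform : ∀ A ∈ F, A.card = 3)
    (hintersecting : ∀ A ∈ F, ∀ B ∈ F, (A ∩ B).Nonempty)
    (hnontrivial : ¬ ∃ x : Fin n, ∀ A ∈ F, x ∈ A) :
    ∃ x : Fin n, (F.filter (fun A => x ∈ A)).card ≤ 3 := by
  by_contra hcon
  push_neg at hcon
  have hdeg : ∀ x : Fin n, 4 ≤ (F.filter (fun A => x ∈ A)).card := fun x => hcon x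
  have hsetof : ∀ x : Fin n, ∃ E ∈ F, x ∈ E := by
    intro x
    have h4 := hdeg x
    have : (F.filter (fun A => x ∈ A)).Nonempty := Finset.card_pos.mp (by omega)
    obtain ⟨E, hE⟩ := this
    simp only [Finset.mem_filter] at hE
    exact ⟨E, hE.1, hE.2⟩
  have hout : ∀ s : Finset (Fin n), s.card < n → ∃ x, x ∉ s := by
    intro s hs
    by_contra h
    push_neg at h
    have : s = Finset.univ := Finset.eq_univ_iff_forall.mpr h
    rw [this, Finset.card_univ, Fintype.card_fin] at hs
    omega
  have notmem : ∀ X Y : Finset (Fin n), Y ∈ F → (X ∩ Y) = ∅ → X ∉ F := by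
    intro X Y hY hXY hX
    obtain ⟨w, hw⟩ := hintersecting X hX Y hY
    rw [hXY] at hw
    exact absurd hw (Finset.notMem_empty w)
  by_cases hone : ∃ A ∈ F, ∃ B ∈ F, (A ∩ B).card = 1
  case neg =>
    -- every two distinct members intersect in exactly 2 points
    push_neg at hone
    have htwo : ∀ A ∈ F, ∀ B ∈ F, A ≠ B → (A ∩ B).card = 2 := by
      intro A hA B hB hAB
      have h1 : 1 ≤ (A ∩ B).card := Finset.card_pos.mpr (hintersecting A hA B hB)
      have h3 : (A ∩ B).card ≤ 3 := by
        have : (A ∩ B).card ≤ A.card := Finset.card_le_card Finset.inter_subset_left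
        rw [huniform A hA] at this; exact this
      have hne1 := hone A hA B hB
      have hne3 : (A ∩ B).card ≠ 3 := by
        intro h
        have hsub : A ⊆ B := by
          have : A ∩ B = A := Finset.eq_of_subset_of_card_le
            (Finset.inter_subset_left) (by rw [huniform A hA, h])
          intro x hx
          rw [← this] at hx
          exact (Finset.mem_inter.mp hx).2
        exact hAB (Finset.eq_of_subset_of_card_le hsub
          (by rw [huniform A hA, huniform B hB]))
      omega
    obtain ⟨x0, hx0⟩ : ∃ x0 : Fin n, True := ⟨⟨0, by omega⟩, trivial⟩
    obtain ⟨A0, hA0F, _⟩ := hsetof x0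
    obtain ⟨u, hu⟩ := hout A0 (by rw [huniform A0 hA0F]; omega)
    obtain ⟨B0, hB0F, huB0⟩ := hsetof u
    have hA0B0 : A0 ≠ B0 := fun h => hu (h ▸ huB0)
    have hI : (A0 ∩ B0).card = 2 := htwo A0 hA0F B0 hB0F hA0B0
    obtain ⟨w, hw⟩ := hout (A0 ∪ B0) (by
      have := Finset.card_union_le A0 B0
      rw [huniform A0 hA0F, huniform B0 hB0F] at this
      omega)
    simp only [Finset.mem_union, not_or] at hw
    have hfil : F.filter (fun E => w ∈ E) ⊆ {insert w (A0 ∩ B0)} := by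
      intro E hE
      simp only [Finset.mem_filter] at hE
      obtain ⟨hEF, hwE⟩ := hE
      have hEA : E ≠ A0 := fun h => hw.1 (h ▸ hwE)
      have hEB : E ≠ B0 := fun h => hw.2 (h ▸ hwE)
      have h2A : (E ∩ A0).card = 2 := htwo E hEF A0 hA0F hEA
      have h2B : (E ∩ B0).card = 2 := htwo E hEF B0 hB0F hEB
      have hcardE : (E.erase w).card = 2 := by
        rw [Finset.card_erase_of_mem hwE, huniform E hEF]
      have heqA : E ∩ A0 = E.erase w := by
        apply Finset.eq_of_subset_of_card_le
        · intro x hx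
          obtain ⟨hxE, hxA⟩ := Finset.mem_inter.mp hx
          exact Finset.mem_erase.mpr ⟨fun h => hw.1 (h ▸ hxA), hxE⟩
        · omega
      have heqB : E ∩ B0 = E.erase w := by
        apply Finset.eq_of_subset_of_card_le
        · intro x hx
          obtain ⟨hxE, hxB⟩ := Finset.mem_inter.mp hx
          exact Finset.mem_erase.mpr ⟨fun h => hw.2 (h ▸ hxB), hxE⟩
        · omega
      have hsubI : E.erase w ⊆ A0 ∩ B0 := by
        intro x hx
        refine Finset.mem_inter.mpr ⟨?_, ?_⟩
        · rw [← heqA] at hx; exact (Finset.mem_inter.mp hx).2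
        · rw [← heqB] at hx; exact (Finset.mem_inter.mp hx).2
      have : E.erase w = A0 ∩ B0 := Finset.eq_of_subset_of_card_le hsubI (by omega)
      have hE' : E = insert w (A0 ∩ B0) := by
        rw [← this, Finset.insert_erase hwE]
      simp [hE']
    have := Finset.card_le_card hfil
    simp only [Finset.card_singleton] at this
    have := hdeg w
    omega
  case pos =>
    obtain ⟨A, hAF, B, hBF, hABcard⟩ := hone
    obtain ⟨z, hABz⟩ := Finset.card_eq_one.mp hABcard
    have hzA : z ∈ A := by
      have : z ∈ A ∩ B := by rw [hABz]; simp
      exact (Finset.mem_inter.mp this).1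
    have hzB : z ∈ B := by
      have : z ∈ A ∩ B := by rw [hABz]; simp
      exact (Finset.mem_inter.mp this).2
    push_neg at hnontrivial
    obtain ⟨C, hCF, hzC⟩ := hnontrivial z
    have hcardAB : (A ∪ B).card = 5 := by
      have := Finset.card_union_add_card_inter A B
      rw [huniform A hAF, huniform B hBF, hABz] at this
      simp only [Finset.card_singleton] at this
      omega
    by_cases hEin : ∃ E0 ∈ F, z ∉ E0 ∧ E0 ⊆ A ∪ B
    case pos =>
      obtain ⟨E0, hE0F, hzE0, hE0sub⟩ := hEin
      have hU : A ∪ B ∪ E0 = A ∪ B := Finset.union_eq_left.mpr hE0sub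
      have hcompl : 2 ≤ ((A ∪ B ∪ E0)ᶜ : Finset (Fin n)).card := by
        rw [Finset.card_compl, hU, hcardAB, Fintype.card_fin]
        omega
      obtain ⟨y1, hy1, y2, hy2, hy12⟩ := Finset.one_lt_card.mp
        (lt_of_lt_of_le one_lt_two hcompl)
      rw [Finset.mem_compl] at hy1 hy2
      exact two_outside F huniform hintersecting A B E0 hAF hBF hE0F
        (by rw [hABz, Finset.singleton_inter_of_notMem hzE0])
        y1 y2 hy12 hy1 hy2 (hdeg y1) (hdeg y2)
    case neg =>
      push_neg at hEin
      -- FINALE: n = 7 configuration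
      obtain ⟨c, hcC, hcAB⟩ := Finset.not_subset.mp (hEin C hCF hzC)
      obtain ⟨a, ha⟩ := hintersecting C hCF A hAF
      obtain ⟨b, hb⟩ := hintersecting C hCF B hBF
      rw [Finset.mem_inter] at ha hb
      obtain ⟨haC, haA⟩ := ha
      obtain ⟨hbC, hbB⟩ := hb
      simp only [Finset.mem_union, not_or] at hcAB
      obtain ⟨hcA, hcB⟩ := hcAB
      have hmemAB : ∀ v : Fin n, v ∈ A → v ∈ B → v = z := by
        intro v h1 h2
        have : v ∈ A ∩ B := Finset.mem_inter.mpr ⟨h1, h2⟩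
        rw [hABz] at this; simpa using this
      have naz : a ≠ z := fun h => hzC (h ▸ haC)
      have nbz : b ≠ z := fun h => hzC (h ▸ hbC)
      have haB : a ∉ B := fun h => naz (hmemAB a haA h)
      have hbA : b ∉ A := fun h => nbz (hmemAB b h hbB)
      have nab : a ≠ b := fun h => haB (h ▸ hbB)
      have nca : c ≠ a := fun h => hcA (h ▸ haA)
      have ncb : c ≠ b := fun h => hcB (h ▸ hbB)
      have ncz : c ≠ z := fun h => hcA (h ▸ hzA)
      have hCeq : C = {a, b, c} := eq_triple (huniform C hCF) haC hbC hcC nab (Ne.symm nca) (Ne.symm ncb)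
      have hUeq : A ∪ B ∪ C = insert c (A ∪ B) := by
        rw [hCeq]
        ext v
        simp only [Finset.mem_union, Finset.mem_insert, Finset.mem_singleton]
        constructor
        · rintro ((h | h) | (rfl | rfl | rfl))
          · exact Or.inr (Or.inl h)
          · exact Or.inr (Or.inr h)
          · exact Or.inr (Or.inl haA)
          · exact Or.inr (Or.inr hbB)
          · exact Or.inl rfl
        · rintro (rfl | h | h)
          · exact Or.inr (Or.inr (Or.inr rfl))
          · exact Or.inl (Or.inl h)
          · exact Or.inl (Or.inr h)
      have hcardU : (A ∪ B ∪ C).card = 6 := by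
        rw [hUeq, Finset.card_insert_of_notMem (by simp [Finset.mem_union, hcA, hcB]), hcardAB]
      by_cases h2out : 2 ≤ ((A ∪ B ∪ C)ᶜ : Finset (Fin n)).card
      case pos =>
        obtain ⟨y1, hy1, y2, hy2, hy12⟩ := Finset.one_lt_card.mp
          (lt_of_lt_of_le one_lt_two h2out)
        rw [Finset.mem_compl] at hy1 hy2
        exact two_outside F huniform hintersecting A B C hAF hBF hCF
          (by rw [hABz, Finset.singleton_inter_of_notMem hzC]) y1 y2 hy12 hy1 hy2
          (hdeg y1) (hdeg y2)
      case neg =>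
        have hcompl1 : ((A ∪ B ∪ C)ᶜ : Finset (Fin n)).card = 1 := by
          have : ((A ∪ B ∪ C)ᶜ : Finset (Fin n)).card = n - 6 := by
            rw [Finset.card_compl, hcardU, Fintype.card_fin]
          omega
        obtain ⟨y, hy⟩ := Finset.card_eq_one.mp hcompl1
        have hyU : y ∉ A ∪ B ∪ C := by
          have : y ∈ ((A ∪ B ∪ C)ᶜ : Finset (Fin n)) := by rw [hy]; simp
          simpa using this
        have hUniv : ∀ v : Fin n, v ∉ A ∪ B ∪ C → v = y := by
          intro v hv
          have : v ∈ ((A ∪ B ∪ C)ᶜ : Finset (Fin n)) := Finset.mem_compl.mpr hv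
          rw [hy] at this; simpa using this
        simp only [Finset.mem_union, not_or] at hyU
        obtain ⟨⟨hyA, hyB⟩, hyC⟩ := hyU
        obtain ⟨p, hp⟩ : ∃ p, A \ {z, a} = {p} := by
          apply Finset.card_eq_one.mp
          rw [Finset.card_sdiff_of_subset (by
            intro v hv
            simp only [Finset.mem_insert, Finset.mem_singleton] at hv
            rcases hv with rfl | rfl <;> assumption)]
          rw [huniform A hAF, Finset.card_pair (Ne.symm naz)]
        have hpA : p ∈ A := by
          have : p ∈ A \ {z, a} := by rw [hp]; simp
          exact (Finset.mem_sdiff.mp this).1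
        have hpza : p ≠ z ∧ p ≠ a := by
          have : p ∈ A \ {z, a} := by rw [hp]; simp
          have := (Finset.mem_sdiff.mp this).2
          simpa using this
        obtain ⟨npz, npa⟩ := hpza
        have hAeq : A = {z, a, p} := eq_triple (huniform A hAF) hzA haA hpA
          (Ne.symm naz) (Ne.symm npz) (Ne.symm npa)
        obtain ⟨q, hq⟩ : ∃ q, B \ {z, b} = {q} := by
          apply Finset.card_eq_one.mp
          rw [Finset.card_sdiff_of_subset (by
            intro v hv
            simp only [Finset.mem_insert, Finset.mem_singleton] at hv
            rcases hv with rfl | rfl <;> assumption)]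
          rw [huniform B hBF, Finset.card_pair (Ne.symm nbz)]
        have hqB : q ∈ B := by
          have : q ∈ B \ {z, b} := by rw [hq]; simp
          exact (Finset.mem_sdiff.mp this).1
        have hqzb : q ≠ z ∧ q ≠ b := by
          have : q ∈ B \ {z, b} := by rw [hq]; simp
          have := (Finset.mem_sdiff.mp this).2
          simpa using this
        obtain ⟨nqz, nqb⟩ := hqzb
        have hBeq : B = {z, b, q} := eq_triple (huniform B hBF) hzB hbB hqB
          (Ne.symm nbz) (Ne.symm nqz) (Ne.symm nqb)
        have hpB : p ∉ B := fun h => npz (hmemAB p hpA h)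
        have hqA : q ∉ A := fun h => nqz (hmemAB q h hqB)
        have naq : a ≠ q := fun h => hqA (h ▸ haA)
        have npb : p ≠ b := fun h => hpB (h ▸ hbB)
        have npq : p ≠ q := fun h => hqA (h ▸ hpA)
        have ncp : c ≠ p := fun h => hcA (h ▸ hpA)
        have ncq : c ≠ q := fun h => hcB (h ▸ hqB)
        have nyz : y ≠ z := fun h => hyA (h ▸ hzA)
        have nya : y ≠ a := fun h => hyA (h ▸ haA)
        have nyp : y ≠ p := fun h => hyA (h ▸ hpA)
        have nyb : y ≠ b := fun h => hyB (h ▸ hbB)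
        have nyq : y ≠ q := fun h => hyB (h ▸ hqB)
        have nyc : y ≠ c := fun h => hyC (h ▸ hcC)
        have nza : z ≠ a := Ne.symm naz
        have nzb : z ≠ b := Ne.symm nbz
        have nzp : z ≠ p := Ne.symm npz
        have nzq : z ≠ q := Ne.symm nqz
        have nzc : z ≠ c := Ne.symm ncz
        have nzy : z ≠ y := Ne.symm nyz
        have nap : a ≠ p := Ne.symm npa
        have nac : a ≠ c := Ne.symm nca
        have nay : a ≠ y := Ne.symm nya
        have nba : b ≠ a := Ne.symm nab
        have nbp : b ≠ p := Ne.symm npb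
        have nbq : b ≠ q := Ne.symm nqb
        have nbc : b ≠ c := Ne.symm ncb
        have nby : b ≠ y := Ne.symm nyb
        have npc : p ≠ c := Ne.symm ncp
        have npy : p ≠ y := Ne.symm nyp
        have nqa : q ≠ a := Ne.symm naq
        have nqp : q ≠ p := Ne.symm npq
        have nqc : q ≠ c := Ne.symm ncq
        have nqy : q ≠ y := Ne.symm nyq
        have ncy : c ≠ y := Ne.symm nyc
        have hSeven : ∀ v : Fin n,
            v = z ∨ v = a ∨ v = p ∨ v = b ∨ v = q ∨ v = c ∨ v = y := by
          intro v
          by_cases hv : v ∈ A ∪ B ∪ C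
          · simp only [Finset.mem_union] at hv
            rcases hv with (h | h) | h
            · rw [hAeq] at h
              simp only [Finset.mem_insert, Finset.mem_singleton] at h
              rcases h with h | h | h
              · exact Or.inl h
              · exact Or.inr (Or.inl h)
              · exact Or.inr (Or.inr (Or.inl h))
            · rw [hBeq] at h
              simp only [Finset.mem_insert, Finset.mem_singleton] at h
              rcases h with h | h | h
              · exact Or.inl h
              · exact Or.inr (Or.inr (Or.inr (Or.inl h)))
              · exact Or.inr (Or.inr (Or.inr (Or.inr (Or.inl h))))
            · rw [hCeq] at h
              simp only [Finset.mem_insert, Finset.mem_singleton] at h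
              rcases h with h | h | h
              · exact Or.inr (Or.inl h)
              · exact Or.inr (Or.inr (Or.inr (Or.inl h)))
              · exact Or.inr (Or.inr (Or.inr (Or.inr (Or.inr (Or.inl h)))))
          · exact Or.inr (Or.inr (Or.inr (Or.inr (Or.inr (Or.inr (hUniv v hv))))))
        have hstruct : ∀ E ∈ F, z ∉ E → ∃ α β γ, (α = a ∨ α = p) ∧ (β = b ∨ β = q) ∧
            (γ = c ∨ γ = y) ∧ E = {α, β, γ} := by
          intro E hE hzE
          obtain ⟨α, hα⟩ := hintersecting E hE A hAF
          rw [Finset.mem_inter] at hα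
          obtain ⟨hαE, hαA⟩ := hα
          have hαap : α = a ∨ α = p := by
            rw [hAeq] at hαA
            simp only [Finset.mem_insert, Finset.mem_singleton] at hαA
            rcases hαA with rfl | h
            · exact absurd hαE hzE
            · exact h
          obtain ⟨β, hβ⟩ := hintersecting E hE B hBF
          rw [Finset.mem_inter] at hβ
          obtain ⟨hβE, hβB⟩ := hβ
          have hβbq : β = b ∨ β = q := by
            rw [hBeq] at hβB
            simp only [Finset.mem_insert, Finset.mem_singleton] at hβB
            rcases hβB with rfl | h
            · exact absurd hβE hzE
            · exact h
          obtain ⟨γ, hγE, hγAB⟩ := Finset.not_subset.mp (hEin E hE hzE)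
          simp only [Finset.mem_union, not_or] at hγAB
          have hγcy : γ = c ∨ γ = y := by
            rcases hSeven γ with rfl | rfl | rfl | rfl | rfl | rfl | rfl
            · exact absurd hzA hγAB.1
            · exact absurd haA hγAB.1
            · exact absurd hpA hγAB.1
            · exact absurd hbB hγAB.2
            · exact absurd hqB hγAB.2
            · exact Or.inl rfl
            · exact Or.inr rfl
          have hαβ : α ≠ β := by
            rcases hαap with rfl | rfl <;> rcases hβbq with rfl | rfl <;> assumption
          have hαγ : α ≠ γ := by
            rcases hαap with rfl | rfl <;> rcases hγcy with rfl | rfl <;> assumption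
          have hβγ : β ≠ γ := by
            rcases hβbq with rfl | rfl <;> rcases hγcy with rfl | rfl <;> assumption
          exact ⟨α, β, γ, hαap, hβbq, hγcy,
            eq_triple (huniform E hE) hαE hβE hγE hαβ hαγ hβγ⟩
        have hpoolA : F.filter (fun E => p ∈ E) ⊆
            ({A, {z,p,b}, {z,p,c}, {p,b,c}, {p,b,y}, {p,q,c}} : Finset (Finset (Fin n))) := by
          intro E hEmem
          simp only [Finset.mem_filter] at hEmem
          obtain ⟨hEF, hpE⟩ := hEmem
          simp only [Finset.mem_insert, Finset.mem_singleton]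
          by_cases hzE : z ∈ E
          · obtain ⟨w, hw⟩ := hintersecting E hEF C hCF
            rw [Finset.mem_inter] at hw
            obtain ⟨hwE, hwC⟩ := hw
            rw [hCeq] at hwC
            simp only [Finset.mem_insert, Finset.mem_singleton] at hwC
            have hzw : z ≠ w := by rcases hwC with rfl | rfl | rfl <;> assumption
            have hpw : p ≠ w := by rcases hwC with rfl | rfl | rfl <;> assumption
            have hEeq : E = {z, p, w} := eq_triple (huniform E hEF) hzE hpE hwE nzp hzw hpw
            rcases hwC with rfl | rfl | rfl
            · refine Or.inl ?_
              rw [hEeq, hAeq]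
              ext v
              simp only [Finset.mem_insert, Finset.mem_singleton]
              constructor
              · rintro (rfl | rfl | rfl)
                · exact Or.inl rfl
                · exact Or.inr (Or.inr rfl)
                · exact Or.inr (Or.inl rfl)
              · rintro (rfl | rfl | rfl)
                · exact Or.inl rfl
                · exact Or.inr (Or.inr rfl)
                · exact Or.inr (Or.inl rfl)
            · exact Or.inr (Or.inl hEeq)
            · exact Or.inr (Or.inr (Or.inl hEeq))
          · obtain ⟨α, β, γ, hα, hβ, hγ, hEeq⟩ := hstruct E hEF hzE
            have hαp : α = p := by
              rcases hα with rfl | rfl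
              · exfalso
                rw [hEeq] at hpE
                simp only [Finset.mem_insert, Finset.mem_singleton] at hpE
                rcases hpE with h | h | h
                · exact npa h
                · rcases hβ with rfl | rfl
                  · exact npb h
                  · exact npq h
                · rcases hγ with rfl | rfl
                  · exact npc h
                  · exact npy h
              · rfl
            subst hαp
            obtain ⟨w, hw⟩ := hintersecting E hEF C hCF
            rw [Finset.mem_inter] at hw
            obtain ⟨hwE, hwC⟩ := hw
            rw [hCeq] at hwC
            simp only [Finset.mem_insert, Finset.mem_singleton] at hwC
            rw [hEeq] at hwE
            simp only [Finset.mem_insert, Finset.mem_singleton] at hwE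
            have hbc : β = b ∨ γ = c := by
              rcases hwC with rfl | rfl | rfl
              · exfalso
                rcases hwE with h | h | h
                · exact nap h
                · rcases hβ with rfl | rfl
                  · exact nab h
                  · exact naq h
                · rcases hγ with rfl | rfl
                  · exact nac h
                  · exact nay h
              · rcases hwE with h | h | h
                · exact absurd h nbp
                · exact Or.inl h.symm
                · exfalso
                  rcases hγ with rfl | rfl
                  · exact nbc h
                  · exact nby h
              · rcases hwE with h | h | h
                · exact absurd h ncp
                · exfalso
                  rcases hβ with rfl | rfl
                  · exact ncb h
                  · exact ncq h
                · exact Or.inr h.symm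
            rcases hβ with rfl | rfl <;> rcases hγ with rfl | rfl
            · exact Or.inr (Or.inr (Or.inr (Or.inl hEeq)))
            · exact Or.inr (Or.inr (Or.inr (Or.inr (Or.inl hEeq))))
            · exact Or.inr (Or.inr (Or.inr (Or.inr (Or.inr hEeq))))
            · exfalso
              rcases hbc with h | h
              · exact nqb h
              · exact nyc h
        have hpoolB : F.filter (fun E => q ∈ E) ⊆
            ({B, {z,q,a}, {z,q,c}, {a,q,c}, {a,q,y}, {p,q,c}} : Finset (Finset (Fin n))) := by
          intro E hEmem
          simp only [Finset.mem_filter] at hEmem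
          obtain ⟨hEF, hqE⟩ := hEmem
          simp only [Finset.mem_insert, Finset.mem_singleton]
          by_cases hzE : z ∈ E
          · obtain ⟨w, hw⟩ := hintersecting E hEF C hCF
            rw [Finset.mem_inter] at hw
            obtain ⟨hwE, hwC⟩ := hw
            rw [hCeq] at hwC
            simp only [Finset.mem_insert, Finset.mem_singleton] at hwC
            have hzw : z ≠ w := by rcases hwC with rfl | rfl | rfl <;> assumption
            have hqw : q ≠ w := by rcases hwC with rfl | rfl | rfl <;> assumption
            have hEeq : E = {z, q, w} := eq_triple (huniform E hEF) hzE hqE hwE nzq hzw hqw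
            rcases hwC with rfl | rfl | rfl
            · exact Or.inr (Or.inl hEeq)
            · refine Or.inl ?_
              rw [hEeq, hBeq]
              ext v
              simp only [Finset.mem_insert, Finset.mem_singleton]
              constructor
              · rintro (rfl | rfl | rfl)
                · exact Or.inl rfl
                · exact Or.inr (Or.inr rfl)
                · exact Or.inr (Or.inl rfl)
              · rintro (rfl | rfl | rfl)
                · exact Or.inl rfl
                · exact Or.inr (Or.inr rfl)
                · exact Or.inr (Or.inl rfl)
            · exact Or.inr (Or.inr (Or.inl hEeq))
          · obtain ⟨α, β, γ, hα, hβ, hγ, hEeq⟩ := hstruct E hEF hzE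
            have hβq : β = q := by
              rcases hβ with rfl | rfl
              · exfalso
                rw [hEeq] at hqE
                simp only [Finset.mem_insert, Finset.mem_singleton] at hqE
                rcases hqE with h | h | h
                · rcases hα with rfl | rfl
                  · exact nqa h
                  · exact nqp h
                · exact nqb h
                · rcases hγ with rfl | rfl
                  · exact nqc h
                  · exact nqy h
              · rfl
            subst hβq
            obtain ⟨w, hw⟩ := hintersecting E hEF C hCF
            rw [Finset.mem_inter] at hw
            obtain ⟨hwE, hwC⟩ := hw
            rw [hCeq] at hwC
            simp only [Finset.mem_insert, Finset.mem_singleton] at hwC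
            rw [hEeq] at hwE
            simp only [Finset.mem_insert, Finset.mem_singleton] at hwE
            have hac : α = a ∨ γ = c := by
              rcases hwC with rfl | rfl | rfl
              · rcases hwE with h | h | h
                · exact Or.inl h.symm
                · exact absurd h naq
                · exfalso
                  rcases hγ with rfl | rfl
                  · exact nac h
                  · exact nay h
              · exfalso
                rcases hwE with h | h | h
                · rcases hα with rfl | rfl
                  · exact nba h
                  · exact nbp h
                · exact nbq h
                · rcases hγ with rfl | rfl
                  · exact nbc h
                  · exact nby h
              · rcases hwE with h | h | h
                · exfalso
                  rcases hα with rfl | rfl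
                  · exact nca h
                  · exact ncp h
                · exact absurd h ncq
                · exact Or.inr h.symm
            rcases hα with rfl | rfl <;> rcases hγ with rfl | rfl
            · exact Or.inr (Or.inr (Or.inr (Or.inl hEeq)))
            · exact Or.inr (Or.inr (Or.inr (Or.inr (Or.inl hEeq))))
            · exact Or.inr (Or.inr (Or.inr (Or.inr (Or.inr hEeq))))
            · exfalso
              rcases hac with h | h
              · exact npa h
              · exact nyc h
        have hdisjF : ∀ x1 x2 x3 y1 y2 y3 : Fin n, ({x1,x2,x3} : Finset (Fin n)) ∈ F →
            x1 ≠ y1 → x1 ≠ y2 → x1 ≠ y3 → x2 ≠ y1 → x2 ≠ y2 → x2 ≠ y3 →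
            x3 ≠ y1 → x3 ≠ y2 → x3 ≠ y3 → ({y1,y2,y3} : Finset (Fin n)) ∉ F := by
          intro x1 x2 x3 y1 y2 y3 hX h11 h12 h13 h21 h22 h23 h31 h32 h33 hY
          obtain ⟨w, hw⟩ := hintersecting _ hX _ hY
          simp only [Finset.mem_inter, Finset.mem_insert, Finset.mem_singleton] at hw
          obtain ⟨h1, h2⟩ := hw
          rcases h1 with rfl | rfl | rfl
          · rcases h2 with h | h | h
            exacts [h11 h, h12 h, h13 h]
          · rcases h2 with h | h | h
            exacts [h21 h, h22 h, h23 h]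
          · rcases h2 with h | h | h
            exacts [h31 h, h32 h, h33 h]
        -- (1) {a,q,y} ∉ F
        have hQ4n : ({a,q,y} : Finset (Fin n)) ∉ F := by
          intro hQ4
          have hP1n := hdisjF a q y z p b hQ4 naz nap nab nqz nqp nqb nyz nyp nyb
          have hP2n := hdisjF a q y z p c hQ4 naz nap nac nqz nqp nqc nyz nyp nyc
          have hP3n := hdisjF a q y p b c hQ4 nap nab nac nqp nqb nqc nyp nyb nyc
          have hsub : F.filter (fun E => p ∈ E) ⊆
              ({A, {p,b,y}, {p,q,c}} : Finset (Finset (Fin n))) := by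
            intro E hE
            have hmem := hpoolA hE
            have hEF : E ∈ F := (Finset.mem_filter.mp hE).1
            simp only [Finset.mem_insert, Finset.mem_singleton] at hmem ⊢
            rcases hmem with h | h | h | h | h | h
            · exact Or.inl h
            · exact absurd (h ▸ hEF) hP1n
            · exact absurd (h ▸ hEF) hP2n
            · exact absurd (h ▸ hEF) hP3n
            · exact Or.inr (Or.inl h)
            · exact Or.inr (Or.inr h)
          have h1 := Finset.card_le_card hsub
          have h2 := card_le_three A ({p,b,y} : Finset (Fin n)) ({p,q,c} : Finset (Fin n))
          have h3 := hdeg p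
          omega
        -- (2) {p,b,y} ∉ F
        have hP4n : ({p,b,y} : Finset (Fin n)) ∉ F := by
          intro hP4
          have hQ1n := hdisjF p b y z q a hP4 npz npq npa nbz nbq nba nyz nyq nya
          have hQ2n := hdisjF p b y z q c hP4 npz npq npc nbz nbq nbc nyz nyq nyc
          have hQ3n := hdisjF p b y a q c hP4 npa npq npc nba nbq nbc nya nyq nyc
          have hsub : F.filter (fun E => q ∈ E) ⊆
              ({B, {a,q,y}, {p,q,c}} : Finset (Finset (Fin n))) := by
            intro E hE
            have hmem := hpoolB hE
            have hEF : E ∈ F := (Finset.mem_filter.mp hE).1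
            simp only [Finset.mem_insert, Finset.mem_singleton] at hmem ⊢
            rcases hmem with h | h | h | h | h | h
            · exact Or.inl h
            · exact absurd (h ▸ hEF) hQ1n
            · exact absurd (h ▸ hEF) hQ2n
            · exact absurd (h ▸ hEF) hQ3n
            · exact Or.inr (Or.inl h)
            · exact Or.inr (Or.inr h)
          have h1 := Finset.card_le_card hsub
          have h2 := card_le_three B ({a,q,y} : Finset (Fin n)) ({p,q,c} : Finset (Fin n))
          have h3 := hdeg q
          omega
        -- (3) {z,p,c} ∈ F
        have hP2F : ({z,p,c} : Finset (Fin n)) ∈ F := by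
          by_contra hP2n
          have hsub : F.filter (fun E => p ∈ E) ⊆
              ({A, {z,p,b}, {p,b,c}, {p,q,c}} : Finset (Finset (Fin n))) := by
            intro E hE
            have hmem := hpoolA hE
            have hEF : E ∈ F := (Finset.mem_filter.mp hE).1
            simp only [Finset.mem_insert, Finset.mem_singleton] at hmem ⊢
            rcases hmem with h | h | h | h | h | h
            · exact Or.inl h
            · exact Or.inr (Or.inl h)
            · exact absurd (h ▸ hEF) hP2n
            · exact Or.inr (Or.inr (Or.inl h))
            · exact absurd (h ▸ hEF) hP4n
            · exact Or.inr (Or.inr (Or.inr h))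
          have heq : F.filter (fun E => p ∈ E) =
              ({A, {z,p,b}, {p,b,c}, {p,q,c}} : Finset (Finset (Fin n))) :=
            Finset.eq_of_subset_of_card_le hsub
              (le_trans (card_le_four _ _ _ _) (hdeg p))
          have hP1F : ({z,p,b} : Finset (Fin n)) ∈ F := by
            have : ({z,p,b} : Finset (Fin n)) ∈ F.filter (fun E => p ∈ E) := by
              rw [heq]
              exact Finset.mem_insert_of_mem (Finset.mem_insert_self _ _)
            exact (Finset.mem_filter.mp this).1
          have hP3F : ({p,b,c} : Finset (Fin n)) ∈ F := by
            have : ({p,b,c} : Finset (Fin n)) ∈ F.filter (fun E => p ∈ E) := by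
              rw [heq]
              exact Finset.mem_insert_of_mem (Finset.mem_insert_of_mem
                (Finset.mem_insert_self _ _))
            exact (Finset.mem_filter.mp this).1
          have hQ3n := hdisjF z p b a q c hP1F nza nzq nzc npa npq npc nba nbq nbc
          have hQ1n := hdisjF p b c z q a hP3F npz npq npa nbz nbq nba ncz ncq nca
          have hsub2 : F.filter (fun E => q ∈ E) ⊆
              ({B, {z,q,c}, {p,q,c}} : Finset (Finset (Fin n))) := by
            intro E hE
            have hmem := hpoolB hE
            have hEF : E ∈ F := (Finset.mem_filter.mp hE).1
            simp only [Finset.mem_insert, Finset.mem_singleton] at hmem ⊢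
            rcases hmem with h | h | h | h | h | h
            · exact Or.inl h
            · exact absurd (h ▸ hEF) hQ1n
            · exact Or.inr (Or.inl h)
            · exact absurd (h ▸ hEF) hQ3n
            · exact absurd (h ▸ hEF) hQ4n
            · exact Or.inr (Or.inr h)
          have h1 := Finset.card_le_card hsub2
          have h2 := card_le_three B ({z,q,c} : Finset (Fin n)) ({p,q,c} : Finset (Fin n))
          have h3 := hdeg q
          omega
        -- (4) {z,q,c} ∈ F
        have hQ2F : ({z,q,c} : Finset (Fin n)) ∈ F := by
          by_contra hQ2n
          have hsub : F.filter (fun E => q ∈ E) ⊆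
              ({B, {z,q,a}, {a,q,c}, {p,q,c}} : Finset (Finset (Fin n))) := by
            intro E hE
            have hmem := hpoolB hE
            have hEF : E ∈ F := (Finset.mem_filter.mp hE).1
            simp only [Finset.mem_insert, Finset.mem_singleton] at hmem ⊢
            rcases hmem with h | h | h | h | h | h
            · exact Or.inl h
            · exact Or.inr (Or.inl h)
            · exact absurd (h ▸ hEF) hQ2n
            · exact Or.inr (Or.inr (Or.inl h))
            · exact absurd (h ▸ hEF) hQ4n
            · exact Or.inr (Or.inr (Or.inr h))
          have heq : F.filter (fun E => q ∈ E) =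
              ({B, {z,q,a}, {a,q,c}, {p,q,c}} : Finset (Finset (Fin n))) :=
            Finset.eq_of_subset_of_card_le hsub
              (le_trans (card_le_four _ _ _ _) (hdeg q))
          have hQ1F : ({z,q,a} : Finset (Fin n)) ∈ F := by
            have : ({z,q,a} : Finset (Fin n)) ∈ F.filter (fun E => q ∈ E) := by
              rw [heq]
              exact Finset.mem_insert_of_mem (Finset.mem_insert_self _ _)
            exact (Finset.mem_filter.mp this).1
          have hQ3F : ({a,q,c} : Finset (Fin n)) ∈ F := by
            have : ({a,q,c} : Finset (Fin n)) ∈ F.filter (fun E => q ∈ E) := by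
              rw [heq]
              exact Finset.mem_insert_of_mem (Finset.mem_insert_of_mem
                (Finset.mem_insert_self _ _))
            exact (Finset.mem_filter.mp this).1
          have hP3n := hdisjF z q a p b c hQ1F nzp nzb nzc nqp nqb nqc nap nab nac
          have hP1n := hdisjF a q c z p b hQ3F naz nap nab nqz nqp nqb ncz ncp ncb
          have hsub2 : F.filter (fun E => p ∈ E) ⊆
              ({A, {z,p,c}, {p,q,c}} : Finset (Finset (Fin n))) := by
            intro E hE
            have hmem := hpoolA hE
            have hEF : E ∈ F := (Finset.mem_filter.mp hE).1
            simp only [Finset.mem_insert, Finset.mem_singleton] at hmem ⊢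
            rcases hmem with h | h | h | h | h | h
            · exact Or.inl h
            · exact absurd (h ▸ hEF) hP1n
            · exact Or.inr (Or.inl h)
            · exact absurd (h ▸ hEF) hP3n
            · exact absurd (h ▸ hEF) hP4n
            · exact Or.inr (Or.inr h)
          have h1 := Finset.card_le_card hsub2
          have h2 := card_le_three A ({z,p,c} : Finset (Fin n)) ({p,q,c} : Finset (Fin n))
          have h3 := hdeg p
          omega
        -- (5) degree of y is at most 3 : contradiction
        have hsuby : F.filter (fun E => y ∈ E) ⊆
            ({ {z,y,a}, {z,y,b}, {z,y,c} } : Finset (Finset (Fin n))) := by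
          intro E hE
          simp only [Finset.mem_filter] at hE
          obtain ⟨hEF, hyE⟩ := hE
          simp only [Finset.mem_insert, Finset.mem_singleton]
          by_cases hzE : z ∈ E
          · obtain ⟨w, hw⟩ := hintersecting E hEF C hCF
            rw [Finset.mem_inter] at hw
            obtain ⟨hwE, hwC⟩ := hw
            rw [hCeq] at hwC
            simp only [Finset.mem_insert, Finset.mem_singleton] at hwC
            have hzw : z ≠ w := by rcases hwC with rfl | rfl | rfl <;> assumption
            have hyw : y ≠ w := by rcases hwC with rfl | rfl | rfl <;> assumption
            have hEeq : E = {z, y, w} := eq_triple (huniform E hEF) hzE hyE hwE nzy hzw hyw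
            rcases hwC with rfl | rfl | rfl
            · exact Or.inl hEeq
            · exact Or.inr (Or.inl hEeq)
            · exact Or.inr (Or.inr hEeq)
          · exfalso
            obtain ⟨α, β, γ, hα, hβ, hγ, hEeq⟩ := hstruct E hEF hzE
            have hγy : γ = y := by
              rw [hEeq] at hyE
              simp only [Finset.mem_insert, Finset.mem_singleton] at hyE
              rcases hyE with h | h | h
              · exfalso
                rcases hα with rfl | rfl
                exacts [nya h, nyp h]
              · exfalso
                rcases hβ with rfl | rfl
                exacts [nyb h, nyq h]
              · exact h.symm
            subst hγy
            obtain ⟨w, hw⟩ := hintersecting E hEF _ hP2F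
            rw [Finset.mem_inter] at hw
            obtain ⟨hwE, hwP⟩ := hw
            rw [hEeq] at hwE
            simp only [Finset.mem_insert, Finset.mem_singleton] at hwE hwP
            have hαp : α = p := by
              rcases hwE with rfl | rfl | rfl
              · rcases hα with rfl | rfl
                · exfalso
                  rcases hwP with h | h | h
                  exacts [naz h, nap h, nac h]
                · rfl
              · exfalso
                rcases hβ with rfl | rfl
                · rcases hwP with h | h | h
                  exacts [nbz h, nbp h, nbc h]
                · rcases hwP with h | h | h
                  exacts [nqz h, nqp h, nqc h]
              · exfalso
                rcases hwP with h | h | h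
                exacts [nyz h, nyp h, nyc h]
            obtain ⟨w2, hw2⟩ := hintersecting E hEF _ hQ2F
            rw [Finset.mem_inter] at hw2
            obtain ⟨hw2E, hw2Q⟩ := hw2
            rw [hEeq] at hw2E
            simp only [Finset.mem_insert, Finset.mem_singleton] at hw2E hw2Q
            have hβq : β = q := by
              rcases hw2E with rfl | rfl | rfl
              · exfalso
                rcases hα with rfl | rfl
                · rcases hw2Q with h | h | h
                  exacts [naz h, naq h, nac h]
                · rcases hw2Q with h | h | h
                  exacts [npz h, npq h, npc h]
              · rcases hβ with rfl | rfl
                · exfalso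
                  rcases hw2Q with h | h | h
                  exacts [nbz h, nbq h, nbc h]
                · rfl
              · exfalso
                rcases hw2Q with h | h | h
                exacts [nyz h, nyq h, nyc h]
            subst hαp
            subst hβq
            obtain ⟨w3, hw3⟩ := hintersecting E hEF C hCF
            rw [Finset.mem_inter] at hw3
            obtain ⟨hw3E, hw3C⟩ := hw3
            rw [hEeq] at hw3E
            rw [hCeq] at hw3C
            simp only [Finset.mem_insert, Finset.mem_singleton] at hw3E hw3C
            rcases hw3E with rfl | rfl | rfl
            · rcases hw3C with h | h | h
              exacts [npa h, npb h, npc h]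
            · rcases hw3C with h | h | h
              exacts [nqa h, nqb h, nqc h]
            · rcases hw3C with h | h | h
              exacts [nya h, nyb h, nyc h]
        have h1 := Finset.card_le_card hsuby
        have h2 := card_le_three ({z,y,a} : Finset (Fin n)) ({z,y,b} : Finset (Fin n))
          ({z,y,c} : Finset (Fin n))
        have h3 := hdeg y
        omega
end

section
/- Let F be an intersecting family of k-element subsets of [n] with kernel K, and for i ∈ [k] let K_i be the family of i-element members of K. Then for every i with 3 ≤ i ≤ k, |K_i| ≤ k^i. -/
open scoped Classical in
noncomputable def minCov {n : ℕ} (F : Finset (Finset (Fin n))) (i : ℕ) :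
    Finset (Finset (Fin n)) :=
  Finset.univ.filter (fun S => S.card = i ∧ (∀ A ∈ F, (S ∩ A).Nonempty) ∧
      ∀ S' ⊂ S, ¬ (∀ A ∈ F, (S' ∩ A).Nonempty))

lemma mem_minCov {n : ℕ} {F : Finset (Finset (Fin n))} {i : ℕ} {S : Finset (Fin n)} :
    S ∈ minCov F i ↔ S.card = i ∧ (∀ A ∈ F, (S ∩ A).Nonempty) ∧
      ∀ S' ⊂ S, ¬ (∀ A ∈ F, (S' ∩ A).Nonempty) := by
  simp [minCov]

lemma minCov_card_le {n k : ℕ} : ∀ (i : ℕ) (F : Finset (Finset (Fin n))),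
    (∀ A ∈ F, A.card ≤ k) → (minCov F i).card ≤ k ^ i := by
  intro i
  induction i with
  | zero =>
    intro F hF
    have hsub : minCov F 0 ⊆ {∅} := by
      intro S hS
      rw [mem_minCov] at hS
      simp [Finset.card_eq_zero.mp hS.1]
    simpa using Finset.card_le_card hsub
  | succ i ih =>
    intro F hF
    rcases F.eq_empty_or_nonempty with rfl | ⟨A₀, hA₀⟩
    · have : minCov (∅ : Finset (Finset (Fin n))) (i + 1) = ∅ := by
        ext S
        rw [mem_minCov]
        simp only [Finset.notMem_empty, iff_false]
        rintro ⟨hcard, -, hmin⟩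
        exact hmin ∅ (by
          rw [Finset.empty_ssubset]
          exact Finset.card_pos.mp (by omega)) (by simp)
      simp [this]
    · -- each minimal cover contains some a ∈ A₀; erase a gives a minimal cover of F_a
      have hsub : minCov F (i + 1) ⊆
          A₀.biUnion (fun a =>
            (minCov (F.filter (fun A => a ∉ A)) i).image (insert a)) := by
        intro S hS
        rw [mem_minCov] at hS
        obtain ⟨hcard, hcov, hmin⟩ := hS
        obtain ⟨a, ha⟩ := hcov A₀ hA₀
        rw [Finset.mem_inter] at ha
        refine Finset.mem_biUnion.mpr ⟨a, ha.2, Finset.mem_image.mpr ⟨S.erase a, ?_, ?_⟩⟩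
        · rw [mem_minCov]
          refine ⟨by rw [Finset.card_erase_of_mem ha.1]; omega, ?_, ?_⟩
          · intro A hA
            rw [Finset.mem_filter] at hA
            obtain ⟨x, hx⟩ := hcov A hA.1
            rw [Finset.mem_inter] at hx
            exact ⟨x, Finset.mem_inter.mpr ⟨Finset.mem_erase.mpr
              ⟨fun h => hA.2 (h ▸ hx.2), hx.1⟩, hx.2⟩⟩
          · intro T hT hTcov
            have hsub2 : insert a T ⊂ S := by
              obtain ⟨y, hy, hyT⟩ := Finset.exists_of_ssubset hT
              refine Finset.ssubset_iff_of_subset ?_ |>.mpr ⟨y, Finset.mem_of_mem_erase hy, ?_⟩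
              · intro x hx
                rcases Finset.mem_insert.mp hx with rfl | hx
                · exact ha.1
                · exact Finset.mem_of_mem_erase (hT.1 hx)
              · rw [Finset.mem_insert]
                push_neg
                exact ⟨Finset.ne_of_mem_erase hy, hyT⟩
            refine hmin _ hsub2 ?_
            intro A hA
            by_cases haA : a ∈ A
            · exact ⟨a, Finset.mem_inter.mpr ⟨Finset.mem_insert_self a T, haA⟩⟩
            · obtain ⟨x, hx⟩ := hTcov A (Finset.mem_filter.mpr ⟨hA, haA⟩)
              rw [Finset.mem_inter] at hx
              exact ⟨x, Finset.mem_inter.mpr ⟨Finset.mem_insert_of_mem hx.1, hx.2⟩⟩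
        · exact Finset.insert_erase ha.1
      calc (minCov F (i + 1)).card
          ≤ ∑ a ∈ A₀, ((minCov (F.filter (fun A => a ∉ A)) i).image (insert a)).card :=
            le_trans (Finset.card_le_card hsub) (Finset.card_biUnion_le)
        _ ≤ ∑ a ∈ A₀, k ^ i := by
            refine Finset.sum_le_sum fun a _ => ?_
            exact le_trans (Finset.card_image_le)
              (ih _ (fun A hA => hF A (Finset.mem_filter.mp hA).1))
        _ = A₀.card * k ^ i := by rw [Finset.sum_const, smul_eq_mul]
        _ ≤ k * k ^ i := Nat.mul_le_mul_right _ (hF A₀ hA₀)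
        _ = k ^ (i + 1) := by ring

/-- Lemma 2.6: if `F` is an intersecting family of `k`-subsets of `[n]` and `3 ≤ i ≤ k`,
then the number of minimal covers of `F` of size `i` is at most `k^i`. -/
theorem kernel_size_bound (n k i : ℕ) (hi : 3 ≤ i) (hik : i ≤ k)
    (F : Finset (Finset (Fin n)))
    (huniform : ∀ A ∈ F, A.card = k)
    (hintersecting : ∀ A ∈ F, ∀ B ∈ F, (A ∩ B).Nonempty) :
    {S : Finset (Fin n) | S.card = i ∧ (∀ A ∈ F, (S ∩ A).Nonempty) ∧
      ∀ S' ⊂ S, ¬ (∀ A ∈ F, (S' ∩ A).Nonempty)}.ncard ≤ k ^ i := by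
  have hset : {S : Finset (Fin n) | S.card = i ∧ (∀ A ∈ F, (S ∩ A).Nonempty) ∧
      ∀ S' ⊂ S, ¬ (∀ A ∈ F, (S' ∩ A).Nonempty)} = ↑(minCov F i) := by
    ext S
    rw [Finset.mem_coe, mem_minCov]
    rfl
  rw [hset, Set.ncard_coe_finset]
  exact minCov_card_le i F (fun A hA => (huniform A hA).le)
end

section
/- Let c ≥ 1, k ≥ 2 and n be integers with n ≥ ck², and let t be an integer with 1 ≤ t ≤ k−1. Then c · C(n−2k+t−1, k−2) ≥ (c−2) · C(n−t−1, k−2). -/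
lemma choose_telescope_bound (r : ℕ) :
    ∀ d a : ℕ, Nat.choose (a + d) (r + 1) ≤
      Nat.choose a (r + 1) + d * Nat.choose (a + d - 1) r := by
  intro d
  induction d with
  | zero => simp
  | succ d ih =>
    intro a
    have h1 : a + (d + 1) = (a + d) + 1 := by omega
    have mono : Nat.choose (a + d - 1) r ≤ Nat.choose (a + d) r :=
      Nat.choose_le_choose r (by omega)
    have hmul : d * Nat.choose (a + d - 1) r ≤ d * Nat.choose (a + d) r :=
      Nat.mul_le_mul_left d mono
    have hih := ih a
    have hsimp : a + (d + 1) - 1 = a + d := by omega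
    rw [h1, Nat.choose_succ_succ]
    rw [show a + d + 1 - 1 = a + d from rfl]
    calc Nat.choose (a + d) r + Nat.choose (a + d) (r + 1)
        ≤ Nat.choose (a + d) r + (Nat.choose a (r + 1) + d * Nat.choose (a + d - 1) r) :=
          Nat.add_le_add_left hih _
      _ ≤ Nat.choose (a + d) r + (Nat.choose a (r + 1) + d * Nat.choose (a + d) r) :=
          Nat.add_le_add_left (Nat.add_le_add_left hmul _) _
      _ = Nat.choose a (r + 1) + (d + 1) * Nat.choose (a + d) r := by ring

/-- Estimate (1): for `c ≥ 1`, `k ≥ 2`, `n ≥ ck²` and `1 ≤ t ≤ k-1`,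
`c · C(n-2k+t-1, k-2) ≥ (c-2) · C(n-t-1, k-2)`. -/
theorem binom_ratio_estimate_one (c k n t : ℕ) (hc : 1 ≤ c) (hk : 2 ≤ k)
    (hn : c * k ^ 2 ≤ n) (ht1 : 1 ≤ t) (ht2 : t ≤ k - 1) :
    ((c : ℤ) - 2) * Nat.choose (n - t - 1) (k - 2) ≤
      (c : ℤ) * Nat.choose (n - 2 * k + t - 1) (k - 2) := by
  rcases le_or_gt c 2 with h | h
  · have h1 : (c : ℤ) - 2 ≤ 0 := by
      have : (c : ℤ) ≤ 2 := by exact_mod_cast h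
      linarith
    have h2 : (0 : ℤ) ≤ (Nat.choose (n - t - 1) (k - 2) : ℤ) := Int.natCast_nonneg _
    have h3 : (0 : ℤ) ≤ (Nat.choose (n - 2 * k + t - 1) (k - 2) : ℤ) := Int.natCast_nonneg _
    have h4 : (0 : ℤ) ≤ (c : ℤ) := Int.natCast_nonneg _
    nlinarith
  · -- c ≥ 3
    have hnat : (c - 2) * Nat.choose (n - t - 1) (k - 2) ≤
        c * Nat.choose (n - 2 * k + t - 1) (k - 2) := by
      rcases Nat.eq_or_lt_of_le hk with hk2 | hk3
      · have hkk0 : k - 2 = 0 := by omega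
        rw [hkk0]
        simp only [Nat.choose_zero_right, Nat.mul_one]
        omega
      · -- k ≥ 3
        have hkk : k * k ≤ c * k ^ 2 := by nlinarith
        have hn2 : 2 * k + 1 ≤ n := by nlinarith
        set a := n - 2 * k + t - 1 with ha
        set b := n - t - 1 with hb
        set d := 2 * (k - t) with hd
        set r := k - 2 with hr
        obtain ⟨r', hr'⟩ : ∃ r', r = r' + 1 := ⟨k - 3, by omega⟩
        have hab : b = a + d := by omega
        have step1 : Nat.choose b r ≤ Nat.choose a r + d * Nat.choose (b - 1) (r - 1) := by
          have := choose_telescope_bound r' d a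
          rw [hab, hr']
          simpa [hr'] using this
        -- identity: b * C(b-1, r-1) = r * C(b, r)
        have hb1 : 1 ≤ b := by omega
        have hid : b * Nat.choose (b - 1) (r' ) = Nat.choose b (r' + 1) * (r' + 1) := by
          have := Nat.add_one_mul_choose_eq (b - 1) r'
          have hbb : b - 1 + 1 = b := by omega
          rwa [hbb] at this
        -- key numeric bound: c * d * r ≤ 2 * b
        have hnum : c * (d * (r' + 1)) ≤ 2 * b := by
          obtain ⟨u, hu⟩ : ∃ u, k = t + u ∧ 1 ≤ u := ⟨k - t, by omega⟩
          have h6 : c * (k - t) * (k - 2) + t + 1 ≤ n := by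
            obtain ⟨hu1, hu2⟩ := hu
            have hkt : k - t = u := by omega
            have hk2' : k - 2 = t + u - 2 := by omega
            rw [hkt, hk2']
            have h7 : c * u * (t + u - 2) + t + 1 ≤ c * (t + u) ^ 2 := by
              obtain ⟨v, hv⟩ : ∃ v, t + u - 2 = v ∧ t + u = v + 2 := ⟨t + u - 2, by omega⟩
              rw [hv.1, hv.2]
              have hcv : v ≤ c * v := Nat.le_mul_of_pos_left v hc
              have stepu : c * u * v ≤ c * (v + 1) * v := by
                have huv : u ≤ v + 1 := by omega
                exact Nat.mul_le_mul_right v (Nat.mul_le_mul_left c huv)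
              have expand : c * (v + 2) ^ 2 = c * (v + 1) * v + (3 * (c * v) + 4 * c) := by
                ring
              rw [expand]
              have htv : t ≤ v + 1 := by omega
              linarith
            calc c * u * (t + u - 2) + t + 1 ≤ c * (t + u) ^ 2 := h7
              _ = c * k ^ 2 := by rw [hu1]
              _ ≤ n := hn
          have hdr : d * (r' + 1) = 2 * ((k - t) * (k - 2)) := by
            rw [hd, ← hr', hr]; ring
          calc c * (d * (r' + 1)) = 2 * (c * (k - t) * (k - 2)) := by rw [hdr]; ring
            _ ≤ 2 * b := by omega
        -- step2 : c * (d * C(b-1, r')) ≤ 2 * C(b, r)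
        have step2 : c * (d * Nat.choose (b - 1) r') ≤ 2 * Nat.choose b r := by
          have hmul : c * (d * Nat.choose (b - 1) r') * (r' + 1) ≤
              2 * Nat.choose b r * (r' + 1) := by
            have e1 : c * (d * Nat.choose (b - 1) r') * (r' + 1) =
                (c * (d * (r' + 1))) * Nat.choose (b - 1) r' := by ring
            have e2 : 2 * Nat.choose b r * (r' + 1) = 2 * (Nat.choose b (r' + 1) * (r' + 1)) := by
              rw [hr']; ring
            rw [e1, e2, ← hid]
            calc (c * (d * (r' + 1))) * Nat.choose (b - 1) r'
                ≤ (2 * b) * Nat.choose (b - 1) r' := Nat.mul_le_mul_right _ hnum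
              _ = 2 * (b * Nat.choose (b - 1) r') := by ring
          exact Nat.le_of_mul_le_mul_right hmul (by omega)
        have hrr : r - 1 = r' := by omega
        rw [hrr] at step1
        have final : c * Nat.choose b r ≤ c * Nat.choose a r + 2 * Nat.choose b r := by
          calc c * Nat.choose b r
              ≤ c * (Nat.choose a r + d * Nat.choose (b - 1) r') := Nat.mul_le_mul_left c step1
            _ = c * Nat.choose a r + c * (d * Nat.choose (b - 1) r') := by ring
            _ ≤ c * Nat.choose a r + 2 * Nat.choose b r := Nat.add_le_add_left step2 _
        have : (c - 2) * Nat.choose b r = c * Nat.choose b r - 2 * Nat.choose b r :=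
          Nat.sub_mul c 2 _
        rw [this]
        omega
    zify [show 2 ≤ c by omega] at hnat
    exact hnat
end

section
/- Let c ≥ 1, k ≥ 4 and n be integers with n ≥ ck². Then c · C(n−k−2, k−3) ≥ (c−1) · C(n−3, k−3). -/
lemma tele_choose (m : ℕ) : ∀ (t a : ℕ),
    Nat.choose a (m + 1) ≤ Nat.choose (a - t) (m + 1) + t * Nat.choose (a - 1) m := by
  intro t
  induction t with
  | zero => simp
  | succ t ih =>
    intro a
    have h1 := ih a
    set X := Nat.choose (a - 1) m with hX
    have h2 : Nat.choose (a - t) (m + 1) ≤ Nat.choose (a - (t + 1)) (m + 1) + X := by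
      rcases Nat.eq_zero_or_pos (a - t) with h | h
      · have h' : a - (t + 1) = 0 := by omega
        simp [h, h']
      · obtain ⟨s, hs⟩ : ∃ s, a - t = s + 1 := ⟨a - t - 1, by omega⟩
        have hss : a - (t + 1) = s := by omega
        rw [hs, hss, Nat.choose_succ_succ]
        have hm : Nat.choose s m ≤ X := Nat.choose_le_choose m (by omega)
        simp only [Nat.succ_eq_add_one]
        omega
    have hmul : (t + 1) * X = t * X + X := by ring
    linarith

/-- Estimate: for `c ≥ 1`, `k ≥ 4`, `n ≥ ck²`,
`c · C(n-k-2, k-3) ≥ (c-1) · C(n-3, k-3)`. -/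
theorem binom_ratio_estimate_two (c k n : ℕ) (hc : 1 ≤ c) (hk : 4 ≤ k)
    (hn : c * k ^ 2 ≤ n) :
    ((c : ℤ) - 1) * Nat.choose (n - 3) (k - 3) ≤
      (c : ℤ) * Nat.choose (n - k - 2) (k - 3) := by
  have hkn : k ^ 2 ≤ n := le_trans (by nlinarith) hn
  have hn16 : 16 ≤ n := le_trans (by nlinarith) hkn
  have hkln : k ≤ n := le_trans (by nlinarith) hkn
  set A := Nat.choose (n - 3) (k - 3) with hA
  set B := Nat.choose (n - k - 2) (k - 3) with hB
  set D := Nat.choose (n - 4) (k - 4) with hD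
  have hBA : B ≤ A := Nat.choose_le_choose _ (by omega)
  -- telescoping: A ≤ B + (k-1) * D
  have htel : A ≤ B + (k - 1) * D := by
    have hm : k - 3 = (k - 4) + 1 := by omega
    have := tele_choose (k - 4) (k - 1) (n - 3)
    have e1 : n - 3 - (k - 1) = n - k - 2 := by omega
    have e2 : n - 3 - 1 = n - 4 := by omega
    rw [e1, e2, ← hm] at this
    simpa [hA, hB, hD] using this
  -- identity: (k-3) * A = (n-3) * D
  have hid : (k - 3) * A = (n - 3) * D := by
    have e3 : n - 3 = (n - 4) + 1 := by omega
    have e4 : k - 3 = (k - 4) + 1 := by omega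
    rw [hA, hD, e3, e4]
    rw [mul_comm, Nat.add_one_mul_choose_eq, mul_comm]
  have hDpos : 0 < D := Nat.choose_pos (by omega)
  -- c * (k-1) * (k-3) ≤ n - 3
  have harith : c * ((k - 1) * (k - 3)) + 3 ≤ n := by
    have h1 : (k - 1) * (k - 3) + 4 * k ≤ k ^ 2 + 3 := by
      have : 4 ≤ k := hk
      nlinarith [Nat.sub_add_cancel (show 1 ≤ k by omega), Nat.sub_add_cancel (show 3 ≤ k by omega)]
    nlinarith
  -- key: c * (k-1) * D ≤ A
  have hkey : c * ((k - 1) * D) ≤ A := by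
    have h5 : (k - 3) * (c * ((k - 1) * D)) ≤ (k - 3) * A := by
      rw [hid]
      have : c * ((k - 1) * (k - 3)) ≤ n - 3 := by omega
      calc (k - 3) * (c * ((k - 1) * D)) = (c * ((k - 1) * (k - 3))) * D := by ring
        _ ≤ (n - 3) * D := Nat.mul_le_mul_right D this
    exact Nat.le_of_mul_le_mul_left h5 (by omega)
  -- combine in ℕ: c * A ≤ c * B + A
  have hnat : c * A ≤ c * B + A := by
    calc c * A ≤ c * (B + (k - 1) * D) := Nat.mul_le_mul_left c htel
      _ = c * B + c * ((k - 1) * D) := by ring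
      _ ≤ c * B + A := by omega
  have := Int.ofNat_le.mpr hnat
  push_cast at this ⊢
  linarith
end

section
/- Let c ≥ 2, k ≥ 4 and n be integers with n ≥ ck², and let F be a family of k-element subsets of [n] such that every x ∈ [n] satisfies d_F(x) > C(n−2, k−2) − C(n−k−2, k−2). Then c · |F| > (c−1)(k−2) · C(n−2, k−2). -/
private lemma step_id (m r : ℕ) : (m - r) * Nat.choose m r = m * Nat.choose (m - 1) r := by
  rcases m with _ | m
  · rcases r with _ | r <;> simp
  · simp only [Nat.add_sub_cancel]
    calc (m + 1 - r) * Nat.choose (m+1) r = Nat.choose (m+1) r * (m + 1 - r) := by ring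
      _ = Nat.choose (m+1) (r+1) * (r+1) := by rw [Nat.choose_succ_right_eq]
      _ = (m+1) * Nat.choose m r := by rw [← Nat.add_one_mul_choose_eq]

private lemma desc_id (r : ℕ) : ∀ (t m : ℕ),
    Nat.choose (m - t) r * ∏ i ∈ Finset.range t, (m - i) =
    Nat.choose m r * ∏ i ∈ Finset.range t, (m - r - i) := by
  intro t
  induction t with
  | zero => simp
  | succ t ih =>
    intro m
    rw [Finset.prod_range_succ, Finset.prod_range_succ]
    have h1 : m - (t+1) = (m - t) - 1 := by omega
    calc Nat.choose (m - (t+1)) r * ((∏ i ∈ Finset.range t, (m - i)) * (m - t))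
        = ((m - t) * Nat.choose ((m-t)-1) r) * ∏ i ∈ Finset.range t, (m - i) := by
          rw [h1]; ring
      _ = ((m - t - r) * Nat.choose (m-t) r) * ∏ i ∈ Finset.range t, (m - i) := by
          rw [← step_id]
      _ = (m - t - r) * (Nat.choose (m-t) r * ∏ i ∈ Finset.range t, (m - i)) := by ring
      _ = (m - t - r) * (Nat.choose m r * ∏ i ∈ Finset.range t, (m - r - i)) := by
          rw [ih]
      _ = Nat.choose m r * ((∏ i ∈ Finset.range t, (m - r - i)) * (m - r - t)) := by
          rw [show m - t - r = m - r - t by omega]; ring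

private lemma tele (a r : ℕ) : ∀ t, Nat.choose a (r+1) + t * Nat.choose a r ≤ Nat.choose (a + t) (r+1) := by
  intro t
  induction t with
  | zero => simp
  | succ t ih =>
    have h := Nat.choose_le_choose r (show a ≤ a + t by omega)
    calc Nat.choose a (r+1) + (t+1) * Nat.choose a r
        = (Nat.choose a (r+1) + t * Nat.choose a r) + Nat.choose a r := by ring
      _ ≤ Nat.choose (a+t) (r+1) + Nat.choose (a+t) r := by omega
      _ = Nat.choose (a+t+1) (r+1) := by rw [Nat.choose_succ_succ (a+t) r, Nat.add_comm]

private lemma pow_sub_le (b d : ℕ) : ∀ t, b ^ t ≤ (b - d)^t + t * d * b^(t-1) := by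
  intro t
  induction t with
  | zero => simp
  | succ t ih =>
    have h2 : b^t * b ≤ ((b-d)^t + t*d*b^(t-1)) * b := Nat.mul_le_mul_right b ih
    have h3 : (b-d)^t * b ≤ (b-d)^(t+1) + d * b^t := by
      calc (b-d)^t * b ≤ (b-d)^t * ((b-d) + d) := Nat.mul_le_mul_left _ (by omega)
        _ = (b-d)^(t+1) + (b-d)^t * d := by ring
        _ ≤ (b-d)^(t+1) + b^t * d := by
            have hh : (b-d)^t ≤ b^t := Nat.pow_le_pow_left (by omega) t
            exact Nat.add_le_add_left (Nat.mul_le_mul_right d hh) _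
        _ = (b-d)^(t+1) + d * b^t := by ring
    have h4 : t*d*b^(t-1)*b ≤ t*d*b^t := by
      rcases t with _ | t
      · simp
      · simp only [Nat.add_sub_cancel]
        calc (t+1)*d*b^t*b = (t+1)*d*b^(t+1) := by ring
          _ ≤ (t+1)*d*b^(t+1) := le_refl _
    calc b^(t+1) = b^t * b := by ring
      _ ≤ ((b-d)^t + t*d*b^(t-1)) * b := h2
      _ = (b-d)^t * b + t*d*b^(t-1)*b := by ring
      _ ≤ ((b-d)^(t+1) + d*b^t) + t*d*b^t := Nat.add_le_add h3 h4
      _ = (b-d)^(t+1) + (t+1)*d*b^((t+1)-1) := by simp only [Nat.add_sub_cancel]; ring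

private lemma arith1 (c k n b : ℕ) (hc : 2 ≤ c) (hk : 4 ≤ k) (hn : c * k ^ 2 ≤ n)
    (hb : b + k + 1 = n) : c * ((k-1) * (k-3)) ≤ b := by
  obtain ⟨k', rfl⟩ : ∃ k', k = k' + 4 := ⟨k - 4, by omega⟩
  obtain ⟨c', rfl⟩ : ∃ c', c = c' + 2 := ⟨c - 2, by omega⟩
  have e1 : k' + 4 - 1 = k' + 3 := by omega
  have e2 : k' + 4 - 3 = k' + 1 := by omega
  rw [e1, e2]
  nlinarith [hn, hb, Nat.zero_le (c' * k')]

private lemma pow_ineq (c n b t d : ℕ) (hc : 2 ≤ c) (hn2 : 2 ≤ n) (ht : 1 ≤ t)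
    (htdb : c * (t * d) ≤ b) :
    (c-1) * (n-2) * b^t ≤ c * n * (b-d)^t := by
  obtain ⟨t, rfl⟩ : ∃ t', t = t' + 1 := ⟨t-1, by omega⟩
  have hm : b^(t+1) = b * b^t := by ring
  have hps := pow_sub_le b d (t+1)
  simp only [Nat.add_sub_cancel] at hps
  have htd2 : (t+1) * d ≤ b := le_trans (Nat.le_mul_of_pos_left _ (by omega)) htdb
  have h5 : (b - (t+1)*d) * b^t ≤ (b-d)^(t+1) := by
    have h6 : (b - (t+1)*d) * b^t + (t+1)*d*b^t = b * b^t := by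
      calc (b - (t+1)*d) * b^t + (t+1)*d*b^t = ((b - (t+1)*d) + (t+1)*d) * b^t := by ring
        _ = b * b^t := by rw [Nat.sub_add_cancel htd2]
    have h7 : b * b^t ≤ (b-d)^(t+1) + (t+1)*d*b^t := by rw [← hm]; exact hps
    omega
  have h8 : (c-1) * (n-2) * b ≤ c * n * (b - (t+1)*d) := by
    have q1 : c * n * (b - (t+1)*d) + c * n * ((t+1)*d) = c * n * b := by
      rw [← Nat.mul_add, Nat.sub_add_cancel htd2]
    have q2 : c * n * ((t+1)*d) ≤ n * b := by
      calc c * n * ((t+1)*d) = n * (c * ((t+1)*d)) := by ring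
        _ ≤ n * b := Nat.mul_le_mul_left n htdb
    have q3 : (c-1) * (n-2) * b + n * b ≤ c * n * b := by
      have q4 : (c-1) * (n-2) + n ≤ c * n := by
        have q5 : (c-1) * (n-2) ≤ (c-1) * n := Nat.mul_le_mul_left (c-1) (by omega)
        have q6 : (c-1) * n + n = c * n := by
          calc (c-1) * n + n = ((c-1) + 1) * n := by ring
            _ = c * n := by rw [show c - 1 + 1 = c by omega]
        omega
      calc (c-1)*(n-2)*b + n*b = ((c-1)*(n-2) + n) * b := by ring
        _ ≤ (c*n) * b := Nat.mul_le_mul_right b q4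
    omega
  calc (c-1)*(n-2)*b^(t+1) = ((c-1)*(n-2)*b) * b^t := by ring
    _ ≤ (c*n*(b - (t+1)*d)) * b^t := Nat.mul_le_mul_right _ h8
    _ = (c*n) * ((b - (t+1)*d) * b^t) := by ring
    _ ≤ (c*n) * (b-d)^(t+1) := Nat.mul_le_mul_left _ h5
    _ = c*n*(b-d)^(t+1) := by ring

private lemma factor_ineq (k n i : ℕ) (hk : 4 ≤ k) (hnk : 2*k + 2 ≤ n) (hi : i < k - 1) :
    (n - 2*k + 2) * (n - 3 - i) ≤ (n - k - 1) * (n - k - i) := by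
  have e1 : n - 2*k + 2 = n - (2*k - 2) := by omega
  have e2 : n - 3 - i = n - (3 + i) := by omega
  have e3 : n - k - i = n - (k + i) := by omega
  have e4 : n - k - 1 = n - (k + 1) := by omega
  rw [e1, e2, e3, e4]
  zify [show 2*k - 2 ≤ n by omega, show 3 + i ≤ n by omega, show k + i ≤ n by omega,
    show k + 1 ≤ n by omega, show 2 ≤ 2*k by omega]
  have h1 : (0:ℤ) ≤ (k:ℤ) - 3 := by omega
  have h2 : (0:ℤ) ≤ (k:ℤ) - 2 - (i:ℤ) := by omega
  nlinarith [mul_nonneg h1 h2]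

private lemma key_ineq (c k n : ℕ) (hc : 2 ≤ c) (hk : 4 ≤ k) (hn : c * k ^ 2 ≤ n)
    (hnk : 2*k + 2 ≤ n) :
    (c-1) * (n-2) * Nat.choose (n-3) (k-3) ≤ c * n * Nat.choose (n-k-2) (k-3) := by
  -- descent identity
  have hPQ : Nat.choose (n-k-2) (k-3) * ∏ i ∈ Finset.range (k-1), (n-3-i)
           = Nat.choose (n-3) (k-3) * ∏ i ∈ Finset.range (k-1), (n-k-i) := by
    have h := desc_id (k-3) (k-1) (n-3)
    rw [show n - 3 - (k-1) = n - k - 2 by omega] at h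
    rwa [Finset.prod_congr rfl (fun i hi => show n-3-(k-3)-i = n-k-i by omega)] at h
  -- product comparison
  have hprod : (n-2*k+2)^(k-1) * ∏ i ∈ Finset.range (k-1), (n-3-i)
             ≤ (n-k-1)^(k-1) * ∏ i ∈ Finset.range (k-1), (n-k-i) := by
    have h := Finset.prod_le_prod' (fun i hi =>
      factor_ineq k n i hk hnk (Finset.mem_range.mp hi))
    rw [Finset.prod_mul_distrib, Finset.prod_mul_distrib, Finset.prod_const,
      Finset.prod_const, Finset.card_range] at h
    exact h
  -- power comparison
  have htdb : c * ((k-1) * (k-3)) ≤ n - k - 1 := arith1 c k n (n-k-1) hc hk hn (by omega)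
  have hpow : (c-1) * (n-2) * (n-k-1)^(k-1) ≤ c * n * (n-2*k+2)^(k-1) := by
    have h := pow_ineq c n (n-k-1) (k-1) (k-3) hc (by omega) (by omega) htdb
    rwa [show n-k-1-(k-3) = n-2*k+2 by omega] at h
  -- positivity
  have hQpos : 0 < ∏ i ∈ Finset.range (k-1), (n-k-i) := by
    apply Finset.prod_pos
    intro i hi
    rw [Finset.mem_range] at hi
    omega
  have hbpos : 0 < (n-k-1)^(k-1) := Nat.pow_pos (by omega)
  -- step 7
  have hstep7 : (c-1) * (n-2) * ∏ i ∈ Finset.range (k-1), (n-3-i)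
              ≤ c * n * ∏ i ∈ Finset.range (k-1), (n-k-i) := by
    have h1 : ((c-1) * (n-2) * ∏ i ∈ Finset.range (k-1), (n-3-i)) * (n-k-1)^(k-1)
            ≤ (c * n * ∏ i ∈ Finset.range (k-1), (n-k-i)) * (n-k-1)^(k-1) := by
      calc ((c-1) * (n-2) * ∏ i ∈ Finset.range (k-1), (n-3-i)) * (n-k-1)^(k-1)
          = ((c-1) * (n-2) * (n-k-1)^(k-1)) * ∏ i ∈ Finset.range (k-1), (n-3-i) := by ring
        _ ≤ (c * n * (n-2*k+2)^(k-1)) * ∏ i ∈ Finset.range (k-1), (n-3-i) :=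
            Nat.mul_le_mul_right _ hpow
        _ = (c * n) * ((n-2*k+2)^(k-1) * ∏ i ∈ Finset.range (k-1), (n-3-i)) := by ring
        _ ≤ (c * n) * ((n-k-1)^(k-1) * ∏ i ∈ Finset.range (k-1), (n-k-i)) :=
            Nat.mul_le_mul_left _ hprod
        _ = (c * n * ∏ i ∈ Finset.range (k-1), (n-k-i)) * (n-k-1)^(k-1) := by ring
    exact Nat.le_of_mul_le_mul_right h1 hbpos
  -- conclude by cancelling Q
  have h2 : ((c-1) * (n-2) * Nat.choose (n-3) (k-3)) * ∏ i ∈ Finset.range (k-1), (n-k-i)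
          ≤ (c * n * Nat.choose (n-k-2) (k-3)) * ∏ i ∈ Finset.range (k-1), (n-k-i) := by
    calc ((c-1) * (n-2) * Nat.choose (n-3) (k-3)) * ∏ i ∈ Finset.range (k-1), (n-k-i)
        = ((c-1) * (n-2)) * (Nat.choose (n-3) (k-3) * ∏ i ∈ Finset.range (k-1), (n-k-i)) := by
          ring
      _ = ((c-1) * (n-2)) * (Nat.choose (n-k-2) (k-3) * ∏ i ∈ Finset.range (k-1), (n-3-i)) := by
          rw [hPQ]
      _ = ((c-1) * (n-2) * ∏ i ∈ Finset.range (k-1), (n-3-i)) * Nat.choose (n-k-2) (k-3) := by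
          ring
      _ ≤ (c * n * ∏ i ∈ Finset.range (k-1), (n-k-i)) * Nat.choose (n-k-2) (k-3) :=
          Nat.mul_le_mul_right _ hstep7
      _ = (c * n * Nat.choose (n-k-2) (k-3)) * ∏ i ∈ Finset.range (k-1), (n-k-i) := by ring
  exact Nat.le_of_mul_le_mul_right h2 hQpos

/-- Estimate (2): if `c ≥ 2`, `k ≥ 4`, `n ≥ ck²` and every vertex of `[n]` has degree
greater than `C(n-2,k-2) - C(n-k-2,k-2)` in a family `F` of `k`-subsets of `[n]`, then
`c · |F| > (c-1)(k-2) · C(n-2,k-2)`. -/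
theorem family_size_lower_bound (c k n : ℕ) (hc : 2 ≤ c) (hk : 4 ≤ k)
    (hn : c * k ^ 2 ≤ n)
    (F : Finset (Finset (Fin n)))
    (huniform : ∀ A ∈ F, A.card = k)
    (hdelta : ∀ x : Fin n,
      Nat.choose (n - 2) (k - 2) - Nat.choose (n - k - 2) (k - 2) <
        (F.filter (fun A => x ∈ A)).card) :
    (c - 1) * (k - 2) * Nat.choose (n - 2) (k - 2) < c * F.card := by
  have hn2 : 2 * k^2 ≤ n := le_trans (Nat.mul_le_mul_right _ hc) hn
  have hnk : 2*k + 2 ≤ n := by nlinarith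
  -- double counting
  have hdc : ∑ x : Fin n, (F.filter (fun A => x ∈ A)).card = F.card * k := by
    calc ∑ x : Fin n, (F.filter (fun A => x ∈ A)).card
        = ∑ x : Fin n, ∑ A ∈ F, if x ∈ A then 1 else 0 :=
          Finset.sum_congr rfl fun x _ => Finset.card_filter _ _
      _ = ∑ A ∈ F, ∑ x : Fin n, if x ∈ A then 1 else 0 := Finset.sum_comm
      _ = ∑ A ∈ F, A.card := by
          refine Finset.sum_congr rfl fun A hA => ?_
          rw [Finset.sum_ite_mem, Finset.univ_inter, Finset.sum_const, smul_eq_mul, mul_one]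
      _ = ∑ A ∈ F, k := Finset.sum_congr rfl huniform
      _ = F.card * k := by rw [Finset.sum_const, smul_eq_mul]
  have hlow : n * ((Nat.choose (n-2) (k-2) - Nat.choose (n-k-2) (k-2)) + 1) ≤ F.card * k := by
    rw [← hdc]
    have h := Finset.card_nsmul_le_sum Finset.univ
      (fun x : Fin n => (F.filter (fun A => x ∈ A)).card)
      ((Nat.choose (n-2) (k-2) - Nat.choose (n-k-2) (k-2)) + 1)
      (fun x _ => Nat.succ_le_of_lt (hdelta x))
    simpa [Finset.card_univ] using h
  -- telescoping
  have htele : Nat.choose (n-k-2) (k-2) + k * Nat.choose (n-k-2) (k-3) ≤ Nat.choose (n-2) (k-2) := by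
    have h := tele (n - k - 2) (k - 3) k
    rw [show n - k - 2 + k = n - 2 by omega, show k - 3 + 1 = k - 2 by omega] at h
    exact h
  -- vertical identity
  have hkD : (n - 2) * Nat.choose (n-3) (k-3) = Nat.choose (n-2) (k-2) * (k - 2) := by
    have h := Nat.add_one_mul_choose_eq (n - 3) (k - 3)
    rw [
      show n - 3 + 1 = n - 2 by omega, show k - 3 + 1 = k - 2 by omega] at h
    exact h
  have hkey := key_ineq c k n hc hk hn hnk
  -- final assembly
  have hfin : k * ((c-1) * (k-2) * Nat.choose (n-2) (k-2)) < k * (c * F.card) := by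
    have h1 : k * ((c-1) * (k-2) * Nat.choose (n-2) (k-2))
            ≤ c * n * (k * Nat.choose (n-k-2) (k-3)) := by
      calc k * ((c-1) * (k-2) * Nat.choose (n-2) (k-2))
          = ((c-1) * ((n-2) * Nat.choose (n-3) (k-3))) * k := by rw [hkD]; ring
        _ = ((c-1) * (n-2) * Nat.choose (n-3) (k-3)) * k := by ring
        _ ≤ (c * n * Nat.choose (n-k-2) (k-3)) * k := Nat.mul_le_mul_right k hkey
        _ = c * n * (k * Nat.choose (n-k-2) (k-3)) := by ring
    have h2 : c * n * (k * Nat.choose (n-k-2) (k-3))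
            ≤ c * n * (Nat.choose (n-2) (k-2) - Nat.choose (n-k-2) (k-2)) :=
      Nat.mul_le_mul_left _ (by omega)
    have h3 : c * n * (Nat.choose (n-2) (k-2) - Nat.choose (n-k-2) (k-2)) + c * n
            ≤ k * (c * F.card) := by
      calc c * n * (Nat.choose (n-2) (k-2) - Nat.choose (n-k-2) (k-2)) + c * n
          = c * (n * ((Nat.choose (n-2) (k-2) - Nat.choose (n-k-2) (k-2)) + 1)) := by ring
        _ ≤ c * (F.card * k) := Nat.mul_le_mul_left c hlow
        _ = k * (c * F.card) := by ring
    have hcn : 0 < c * n := Nat.mul_pos (by omega) (by omega)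
    omega
  exact Nat.lt_of_mul_lt_mul_left hfin
end
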